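/- arXiv:1508.07154 — 5 statements merged into one kernel-verified Lean document; each statement's English description precedes it below -/
import Mathlib

section
/- Let c ≥ 0 be a real number and let G be a c-almost-complete graph on n vertices. Then for every integer m with max{3, 2c + 2} ≤ m ≤ n, G contains a cycle of length exactly m. -/
open SimpleGraph

/-- The largest even integer not greater than `x`. -/
noncomputable def evenFloor (x : ℝ) : ℤ := 2 * ⌊x / 2⌋

/-- The largest odd integer not greater than `x`. -/
noncomputable def oddFloor (x : ℝ) : ℤ := 2 * ⌊(x - 1) / 2⌋ + 1

/-- `G` contains a cycle on exactly `m` vertices. -/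
def HasCycleLen {V : Type*} (G : SimpleGraph V) (m : ℕ) : Prop :=
  ∃ (v : V) (w : G.Walk v v), w.IsCycle ∧ w.length = m

/-- The colour-`i` subgraph of the complete graph on `V` whose edges are coloured by `χ`. -/
def colourGraph {V : Type*} (χ : Sym2 V → Fin 3) (i : Fin 3) : SimpleGraph V where
  Adj u v := u ≠ v ∧ χ s(u, v) = i
  symm := ⟨by
    intro u v h
    refine ⟨h.1.symm, ?_⟩
    rw [Sym2.eq_swap]
    exact h.2⟩
  loopless := ⟨fun u h => h.1 rfl⟩

/-- Every 3-colouring of the edges of the complete graph on `N` vertices yields, for some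
`i ∈ {1,2,3}`, a cycle on `mᵢ` vertices all of whose edges have colour `i`. -/
def CycleRamseyProp (m₁ m₂ m₃ N : ℕ) : Prop :=
  ∀ χ : Sym2 (Fin N) → Fin 3,
    HasCycleLen (colourGraph χ 0) m₁ ∨ HasCycleLen (colourGraph χ 1) m₂ ∨
      HasCycleLen (colourGraph χ 2) m₃

/-- The degree of `v` in `G`. -/
noncomputable def ndeg {V : Type*} (G : SimpleGraph V) (v : V) : ℕ :=
  {u : V | G.Adj v u}.ncard

/-- The number of neighbours of `v` inside the set `S`. -/
noncomputable def degIn {V : Type*} (G : SimpleGraph V) (S : Finset V) (v : V) : ℕ :=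
  {u : V | u ∈ S ∧ G.Adj v u}.ncard

/-- The number of ordered pairs `(a, b) ∈ A × B` with `a` adjacent to `b` in `G`. -/
noncomputable def pairCount {V : Type*} (G : SimpleGraph V) (A B : Finset V) : ℕ :=
  {p : V × V | p.1 ∈ A ∧ p.2 ∈ B ∧ G.Adj p.1 p.2}.ncard

/-- The density `d(A,B)` of the pair `(A, B)` in `G`. -/
noncomputable def density {V : Type*} (G : SimpleGraph V) (A B : Finset V) : ℝ :=
  (pairCount G A B : ℝ) / ((A.card : ℝ) * (B.card : ℝ))

/-- The pair `(A, B)` is `(ε, G)`-regular. -/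
def IsRegularPair {V : Type*} (G : SimpleGraph V) (ε : ℝ) (A B : Finset V) : Prop :=
  ∀ A' ⊆ A, ∀ B' ⊆ B, ε * (A.card : ℝ) ≤ (A'.card : ℝ) →
    ε * (B.card : ℝ) ≤ (B'.card : ℝ) →
    |density G A' B' - density G A B| < ε

/-- The pair `(A, B)` is simultaneously `(ε, Gᵣ)`-regular for `r = 1, 2, 3`. -/
def SimRegular {V : Type*} (ε : ℝ) (G₁ G₂ G₃ : SimpleGraph V) (A B : Finset V) : Prop :=
  IsRegularPair G₁ ε A B ∧ IsRegularPair G₂ ε A B ∧ IsRegularPair G₃ ε A B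

/-- `M` is a connected-matching in `G`: a collection of edges, pairwise vertex-disjoint,
all lying in the same connected component of `G`. -/
def IsConnMatching {V : Type*} (G : SimpleGraph V) (M : Finset (V × V)) : Prop :=
  (∀ e ∈ M, G.Adj e.1 e.2) ∧
  (∀ e ∈ M, ∀ f ∈ M, e ≠ f → e.1 ≠ f.1 ∧ e.1 ≠ f.2 ∧ e.2 ≠ f.1 ∧ e.2 ≠ f.2) ∧
  (∀ e ∈ M, ∀ f ∈ M, G.Reachable e.1 f.1)

/-- `G` contains a connected-matching on at least `m` vertices. -/
def HasConnMatching {V : Type*} (G : SimpleGraph V) (m : ℝ) : Prop :=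
  ∃ M : Finset (V × V), IsConnMatching G M ∧ m ≤ 2 * (M.card : ℝ)

/-- `G` contains an odd connected-matching on at least `m` vertices: a connected-matching
whose component also contains an odd cycle. -/
def HasOddConnMatching {V : Type*} (G : SimpleGraph V) (m : ℝ) : Prop :=
  ∃ M : Finset (V × V), IsConnMatching G M ∧ m ≤ 2 * (M.card : ℝ) ∧
    ∃ (v : V) (w : G.Walk v v), w.IsCycle ∧ Odd w.length ∧ ∀ e ∈ M, G.Reachable e.1 v

/-- `(V₀, V₁, …, V_K)` (given as `P : Fin (K+1) → Finset V`, with `P 0` the exceptional class)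
is an `(ε, G₁, G₂, G₃)`-regular partition. -/
def IsRegularPartition3 {V : Type*} [Fintype V] (ε : ℝ) (G₁ G₂ G₃ : SimpleGraph V)
    {K : ℕ} (P : Fin (K + 1) → Finset V) : Prop :=
  (∀ i j, i ≠ j → Disjoint (P i) (P j)) ∧
  (∀ v : V, ∃ i, v ∈ P i) ∧
  ((P 0).card : ℝ) ≤ ε * (Fintype.card V : ℝ) ∧
  (∀ i j : Fin (K + 1), i ≠ 0 → j ≠ 0 → (P i).card = (P j).card) ∧
  (∀ i : Fin (K + 1), i ≠ 0 →
    (({j : Fin (K + 1) | j ≠ 0 ∧ j ≠ i ∧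
        ¬ SimRegular ε G₁ G₂ G₃ (P i) (P j)}.ncard : ℝ) ≤ ε * K))

/-- The colour-`Gc` subgraph of the three-multicoloured `(ε, ξ, Π)`-reduced-graph of the
three-coloured graph with colour subgraphs `G₁, G₂, G₃` and regular partition `P`:
vertices are the non-exceptional classes `P 1, …, P K`; two of them are adjacent if the pair is
simultaneously `(ε, Gᵣ)`-regular for `r = 1,2,3` and receive colour `Gc` if moreover the
`Gc`-density of the pair is at least `ξ`. -/
def reducedGraph {V : Type*} (ε ξ : ℝ) (G₁ G₂ G₃ : SimpleGraph V) {K : ℕ}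
    (P : Fin (K + 1) → Finset V) (Gc : SimpleGraph V) : SimpleGraph (Fin K) where
  Adj a b := a ≠ b ∧
    (SimRegular ε G₁ G₂ G₃ (P a.succ) (P b.succ) ∧
      SimRegular ε G₁ G₂ G₃ (P b.succ) (P a.succ)) ∧
    (ξ ≤ density Gc (P a.succ) (P b.succ) ∧ ξ ≤ density Gc (P b.succ) (P a.succ))
  symm := ⟨by
    intro a b h
    exact ⟨h.1.symm, ⟨h.2.1.2, h.2.1.1⟩, ⟨h.2.2.2, h.2.2.1⟩⟩⟩
  loopless := ⟨fun a h => h.1 rfl⟩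

/-- The two-multicoloured graph induced on `X`, with colour subgraphs `Gγ₁` (colour `γ₁`)
and `Gγ₂` (colour `γ₂`), contains a two-multicoloured spanning subgraph belonging to the class
`H(x₁, x₂, c₁, c₂, γ₁, γ₂)`. -/
def ContainsClassH {V : Type*} [DecidableEq V] (Gγ₁ Gγ₂ : SimpleGraph V) (X : Finset V)
    (x₁ x₂ c₁ c₂ : ℝ) : Prop :=
  ∃ (H₁ H₂ : SimpleGraph V) (X₁ X₂ : Finset V),
    H₁ ≤ Gγ₁ ∧ H₂ ≤ Gγ₂ ∧
    (∀ u v : V, (H₁ ⊔ H₂).Adj u v → u ∈ X ∧ v ∈ X) ∧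
    Disjoint X₁ X₂ ∧ X₁ ∪ X₂ = X ∧
    x₁ ≤ (X₁.card : ℝ) ∧ x₂ ≤ (X₂.card : ℝ) ∧
    (∀ v ∈ X, ((X.card : ℝ) - 1) - c₁ ≤ (degIn (H₁ ⊔ H₂) X v : ℝ)) ∧
    (∀ v ∈ X₁, (1 - c₂) * ((X₁.card : ℝ) - 1) ≤ (degIn H₁ X₁ v : ℝ)) ∧
    (∀ v ∈ X₁, (degIn H₂ X₁ v : ℝ) ≤ c₂ * ((X₁.card : ℝ) - 1)) ∧
    (∀ v ∈ X₁, (1 - c₂) * (X₂.card : ℝ) ≤ (degIn H₂ X₂ v : ℝ)) ∧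
    (∀ v ∈ X₂, (1 - c₂) * (X₁.card : ℝ) ≤ (degIn H₂ X₁ v : ℝ)) ∧
    (∀ v ∈ X₁, (degIn H₁ X₂ v : ℝ) ≤ c₂ * (X₂.card : ℝ)) ∧
    (∀ v ∈ X₂, (degIn H₁ X₁ v : ℝ) ≤ c₂ * (X₁.card : ℝ))

/-- Membership of the structure `H((a − 2η^{1/32})k, (b/2 − 2η^{1/32})k, 3η⁴k, η^{1/32}, γ₁, γ₂)`
on a vertex set `X`, where `Ga`, `Gb` are the colour-`γ₁` and colour-`γ₂` subgraphs. -/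
def MemH1 {V : Type*} [DecidableEq V] (Ga Gb : SimpleGraph V) (a b η : ℝ) (k : ℕ)
    (X : Finset V) : Prop :=
  ContainsClassH Ga Gb X ((a - 2 * η ^ ((1 : ℝ) / 32)) * k)
    ((b / 2 - 2 * η ^ ((1 : ℝ) / 32)) * k) (3 * η ^ 4 * k) (η ^ ((1 : ℝ) / 32))

/-- The edge `uv` is coloured exclusively with the colour of `Ga` (and not the colours of
`Gb`, `Gc`). -/
def ExclColour {V : Type*} (Ga Gb Gc : SimpleGraph V) (u v : V) : Prop :=
  Ga.Adj u v ∧ ¬ Gb.Adj u v ∧ ¬ Gc.Adj u v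

/-- The three-multicoloured graph with colour subgraphs `G₁, G₂, G₃` (red, blue, green)
contains a subgraph from the class `K(x₁, x₂, x₃, c)`. -/
def ContainsClassK {V : Type*} [DecidableEq V] (G₁ G₂ G₃ : SimpleGraph V)
    (x₁ x₂ x₃ c : ℝ) : Prop :=
  ∃ (H : SimpleGraph V) (X₁ X₂ X₃ : Finset V),
    H ≤ G₁ ⊔ G₂ ⊔ G₃ ∧
    Disjoint X₁ X₂ ∧ Disjoint X₁ X₃ ∧ Disjoint X₂ X₃ ∧
    x₁ ≤ (X₁.card : ℝ) ∧ x₂ ≤ (X₂.card : ℝ) ∧ x₃ ≤ (X₃.card : ℝ) ∧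
    (∀ u v : V, H.Adj u v → u ∈ X₁ ∪ X₂ ∪ X₃ ∧ v ∈ X₁ ∪ X₂ ∪ X₃) ∧
    (∀ v ∈ X₁ ∪ X₂ ∪ X₃,
      (((X₁ ∪ X₂ ∪ X₃).card : ℝ) - 1) - c ≤ (degIn H (X₁ ∪ X₂ ∪ X₃) v : ℝ)) ∧
    (∀ u ∈ X₁, ∀ v ∈ X₃, H.Adj u v → ExclColour G₁ G₂ G₃ u v) ∧
    (∀ u ∈ X₂, ∀ v ∈ X₃, H.Adj u v → ExclColour G₂ G₁ G₃ u v) ∧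
    (∀ u ∈ X₃, ∀ v ∈ X₃, H.Adj u v → ExclColour G₃ G₁ G₂ u v)

/-- The three-multicoloured graph with colour subgraphs `G₁, G₂, G₃` (red, blue, green)
contains a subgraph from the class `K*(x₁, x₂, y₁, y₂, z, c)`. -/
def ContainsClassKstar {V : Type*} [DecidableEq V] (G₁ G₂ G₃ : SimpleGraph V)
    (x₁ x₂ y₁ y₂ z c : ℝ) : Prop :=
  ∃ (H : SimpleGraph V) (X₁ X₂ Y₁ Y₂ : Finset V),
    H ≤ G₁ ⊔ G₂ ⊔ G₃ ∧
    Disjoint X₁ X₂ ∧ Disjoint X₁ Y₁ ∧ Disjoint X₁ Y₂ ∧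
    Disjoint X₂ Y₁ ∧ Disjoint X₂ Y₂ ∧ Disjoint Y₁ Y₂ ∧
    x₁ ≤ (X₁.card : ℝ) ∧ x₂ ≤ (X₂.card : ℝ) ∧ y₁ ≤ (Y₁.card : ℝ) ∧ y₂ ≤ (Y₂.card : ℝ) ∧
    z ≤ (Y₁.card : ℝ) + (Y₂.card : ℝ) ∧
    (∀ u v : V, H.Adj u v → u ∈ X₁ ∪ X₂ ∪ Y₁ ∪ Y₂ ∧ v ∈ X₁ ∪ X₂ ∪ Y₁ ∪ Y₂) ∧
    (∀ v ∈ X₁ ∪ X₂ ∪ Y₁ ∪ Y₂,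
      (((X₁ ∪ X₂ ∪ Y₁ ∪ Y₂).card : ℝ) - 1) - c ≤ (degIn H (X₁ ∪ X₂ ∪ Y₁ ∪ Y₂) v : ℝ)) ∧
    (∀ u ∈ X₁, ∀ v ∈ Y₁, H.Adj u v → ExclColour G₁ G₂ G₃ u v) ∧
    (∀ u ∈ X₂, ∀ v ∈ Y₂, H.Adj u v → ExclColour G₁ G₂ G₃ u v) ∧
    (∀ u ∈ X₁, ∀ v ∈ Y₂, H.Adj u v → ExclColour G₂ G₁ G₃ u v) ∧
    (∀ u ∈ X₂, ∀ v ∈ Y₁, H.Adj u v → ExclColour G₂ G₁ G₃ u v) ∧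
    (∀ u ∈ X₁, ∀ v ∈ X₂, H.Adj u v → ExclColour G₃ G₁ G₂ u v) ∧
    (∀ u ∈ Y₁, ∀ v ∈ Y₂, H.Adj u v → ExclColour G₃ G₁ G₂ u v)

lemma auxB {V : Type*} {G : SimpleGraph V} {m : ℕ} (hm : 3 ≤ m) (g : ℕ → V)
    (hinj : ∀ a, a < m → ∀ b, b < m → g a = g b → a = b)
    (hadj : ∀ i, i + 1 < m → G.Adj (g i) (g (i+1)))
    (hlast : G.Adj (g (m-1)) (g 0)) :
    HasCycleLen G m := by
  have key : ∀ j, j ≤ m - 1 → ∃ w : G.Walk (g (m-1-j)) (g (m-1)),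
      w.length = j ∧ w.IsPath ∧
      (∀ x ∈ w.support, ∃ t, t ≤ j ∧ x = g (m-1-j+t)) ∧
      (∀ e ∈ w.edges, ∃ t, t+1 ≤ j ∧ e = s(g (m-1-j+t), g (m-1-j+t+1))) := by
    intro j
    induction j with
    | zero =>
      intro _
      refine ⟨Walk.nil, rfl, Walk.IsPath.nil, ?_, ?_⟩
      · intro x hx
        simp only [Walk.support_nil, List.mem_singleton] at hx
        exact ⟨0, le_rfl, by simpa using hx⟩
      · intro e he; simp at he
    | succ j ih =>
      intro hj
      obtain ⟨w, hlen, hpath, hsupp, hedge⟩ := ih (by omega)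
      have ha : m - 1 - (j+1) + 1 = m - 1 - j := by omega
      have hadj' : G.Adj (g (m-1-(j+1))) (g (m-1-j)) := by
        have h2 := hadj (m-1-(j+1)) (by omega)
        rwa [ha] at h2
      have hnot : g (m-1-(j+1)) ∉ w.support := by
        intro hx
        obtain ⟨t, ht, hxt⟩ := hsupp _ hx
        have := hinj _ (by omega) _ (by omega) hxt
        omega
      refine ⟨Walk.cons hadj' w, by simp [hlen], hpath.cons hnot, ?_, ?_⟩
      · intro x hx
        rw [Walk.support_cons, List.mem_cons] at hx
        rcases hx with hx | hx
        · exact ⟨0, by omega, by simpa using hx⟩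
        · obtain ⟨t, ht, hxt⟩ := hsupp _ hx
          refine ⟨t+1, by omega, ?_⟩
          have : m - 1 - (j+1) + (t+1) = m - 1 - j + t := by omega
          rw [this]; exact hxt
      · intro e he
        rw [Walk.edges_cons, List.mem_cons] at he
        rcases he with he | he
        · refine ⟨0, by omega, ?_⟩
          have e1 : m - 1 - (j+1) + 0 = m - 1 - (j+1) := by omega
          have e2 : m - 1 - (j+1) + 0 + 1 = m - 1 - j := by omega
          rw [e1, e2]; exact he
        · obtain ⟨t, ht, hxt⟩ := hedge _ he
          refine ⟨t+1, by omega, ?_⟩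
          have e1 : m - 1 - (j+1) + (t+1) = m - 1 - j + t := by omega
          rw [e1]; exact hxt
  obtain ⟨w, hlen, hpath, hsupp, hedge⟩ := key (m-1) le_rfl
  have h0 : m - 1 - (m - 1) = 0 := Nat.sub_self _
  have hadj0 : G.Adj (g (m-1-(m-1))) (g (m-1)) := by rw [h0]; exact hlast.symm
  refine ⟨g (m-1-(m-1)), Walk.cons hadj0 w.reverse, ?_, ?_⟩
  · rw [Walk.cons_isCycle_iff]
    refine ⟨hpath.reverse, ?_⟩
    rw [Walk.edges_reverse, List.mem_reverse]
    intro hmem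
    obtain ⟨t, ht, he⟩ := hedge _ hmem
    rw [h0] at he
    simp only [Nat.zero_add] at he
    rw [Sym2.eq_iff] at he
    rcases he with ⟨he1, he2⟩ | ⟨he1, he2⟩
    · have h1 := hinj _ (by omega) _ (by omega) he1
      have h2 := hinj _ (by omega) _ (by omega) he2
      omega
    · have h1 := hinj _ (by omega) _ (by omega) he1
      omega
  · simp [Walk.length_cons, Walk.length_reverse, hlen]; omega


lemma swapLemma {V : Type*} [Fintype V] {G : SimpleGraph V} {c : ℝ} {m : ℕ} (hm : 3 ≤ m)
    (hM : ∀ v : V, ({u : V | u ≠ v ∧ ¬ G.Adj v u}.ncard : ℝ) ≤ c)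
    (h2c : 2 * c + 2 ≤ (m : ℝ))
    (σ : ZMod m → V) (hσ : Function.Injective σ)
    (hbp : ¬ G.Adj (σ (-1)) (σ 0)) :
    ∃ σ' : ZMod m → V, Function.Injective σ' ∧
      {k : ZMod m | ¬ G.Adj (σ' k) (σ' (k+1))}.ncard
        < {k : ZMod m | ¬ G.Adj (σ k) (σ (k+1))}.ncard := by
  classical
  haveI : NeZero m := ⟨by omega⟩
  have hcast : ∀ k : ZMod m, ((k.val : ℕ) : ZMod m) = k := fun k => ZMod.natCast_rightInverse k
  have hneg1 : ((m - 1 : ℕ) : ZMod m) = -1 := by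
    have h1 : ((m - 1 : ℕ) : ZMod m) + 1 = 0 := by
      rw [← Nat.cast_add_one]
      have h2 : m - 1 + 1 = m := by omega
      rw [h2, ZMod.natCast_self]
    exact eq_neg_of_add_eq_zero_left h1
  have hvneg : (-1 : ZMod m).val = m - 1 := by
    rw [← hneg1, ZMod.val_cast_of_lt (by omega)]
  have hsucc : ∀ k : ZMod m, k.val < m - 1 → (k+1).val = k.val + 1 := by
    intro k hk
    have h1 : k + 1 = ((k.val + 1 : ℕ) : ZMod m) := by rw [Nat.cast_add_one, hcast]
    rw [h1, ZMod.val_cast_of_lt (by omega)]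
  -- bound on A1
  have boundA : ∀ (v : V) (f : ZMod m → V), Function.Injective f →
      (∀ x : ZMod m, x ≠ -1 → f x ≠ v) →
      (({j : ZMod m | ¬ G.Adj v (f j)}.ncard : ℝ)) ≤ 1 + c := by
    intro v f hf hfv
    have hsub : {j : ZMod m | ¬ G.Adj v (f j)} ⊆
        insert (-1) ({j : ZMod m | ¬ G.Adj v (f j)} \ {(-1 : ZMod m)}) := by
      intro x hx
      by_cases hx1 : x = -1
      · exact hx1 ▸ Set.mem_insert _ _
      · exact Set.mem_insert_of_mem _ ⟨hx, hx1⟩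
    have h1 : {j : ZMod m | ¬ G.Adj v (f j)}.ncard ≤
        ({j : ZMod m | ¬ G.Adj v (f j)} \ {(-1 : ZMod m)}).ncard + 1 :=
      le_trans (Set.ncard_le_ncard hsub (Set.toFinite _)) (Set.ncard_insert_le _ _)
    have h2 : ({j : ZMod m | ¬ G.Adj v (f j)} \ {(-1 : ZMod m)}).ncard ≤
        {u : V | u ≠ v ∧ ¬ G.Adj v u}.ncard := by
      apply Set.ncard_le_ncard_of_injOn f
      · rintro x ⟨hx, hx1⟩
        exact ⟨hfv x (by simpa using hx1), hx⟩
      · exact hf.injOn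
    have h3 := hM v
    have h1' : ({j : ZMod m | ¬ G.Adj v (f j)}.ncard : ℝ) ≤
        (({j : ZMod m | ¬ G.Adj v (f j)} \ {(-1 : ZMod m)}).ncard : ℝ) + 1 := by
      exact_mod_cast h1
    have h2' : (({j : ZMod m | ¬ G.Adj v (f j)} \ {(-1 : ZMod m)}).ncard : ℝ) ≤
        ({u : V | u ≠ v ∧ ¬ G.Adj v u}.ncard : ℝ) := by exact_mod_cast h2
    linarith
  have hA1 : (({j : ZMod m | ¬ G.Adj (σ (-1)) (σ j)}.ncard : ℝ)) ≤ 1 + c :=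
    boundA (σ (-1)) σ hσ (fun x hx h => hx (hσ h))
  have hA2 : (({j : ZMod m | ¬ G.Adj (σ 0) (σ (j+1))}.ncard : ℝ)) ≤ 1 + c := by
    have hinj1 : Function.Injective (fun j : ZMod m => σ (j+1)) :=
      hσ.comp (add_left_injective 1)
    refine boundA (σ 0) (fun j => σ (j+1)) hinj1 ?_
    intro x hx h
    apply hx
    have h0 : x + 1 = 0 := by
      by_contra h1
      exact h1 ((hσ h) ▸ rfl)
    exact eq_neg_of_add_eq_zero_left h0
  have hmem1 : (-1 : ZMod m) ∈ {j : ZMod m | ¬ G.Adj (σ (-1)) (σ j)} := G.loopless.irrefl _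
  have hmem2 : (-1 : ZMod m) ∈ {j : ZMod m | ¬ G.Adj (σ 0) (σ (j+1))} := by
    show ¬ G.Adj (σ 0) (σ (-1 + 1))
    rw [neg_add_cancel]
    exact G.loopless.irrefl _
  have hkey := Set.ncard_union_add_ncard_inter {j : ZMod m | ¬ G.Adj (σ (-1)) (σ j)}
    {j : ZMod m | ¬ G.Adj (σ 0) (σ (j+1))} (Set.toFinite _) (Set.toFinite _)
  have hint : 1 ≤ ({j : ZMod m | ¬ G.Adj (σ (-1)) (σ j)} ∩
      {j : ZMod m | ¬ G.Adj (σ 0) (σ (j+1))}).ncard :=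
    (Set.ncard_pos (Set.toFinite _)).mpr ⟨-1, hmem1, hmem2⟩
  have hunion : (({j : ZMod m | ¬ G.Adj (σ (-1)) (σ j)} ∪
      {j : ZMod m | ¬ G.Adj (σ 0) (σ (j+1))}).ncard : ℝ) ≤ (m : ℝ) - 1 := by
    have h1 : (({j : ZMod m | ¬ G.Adj (σ (-1)) (σ j)} ∪
        {j : ZMod m | ¬ G.Adj (σ 0) (σ (j+1))}).ncard : ℝ) + 1 ≤
        ({j : ZMod m | ¬ G.Adj (σ (-1)) (σ j)}.ncard : ℝ) +
        ({j : ZMod m | ¬ G.Adj (σ 0) (σ (j+1))}.ncard : ℝ) := by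
      have := hkey
      have h2 : ({j : ZMod m | ¬ G.Adj (σ (-1)) (σ j)} ∪
          {j : ZMod m | ¬ G.Adj (σ 0) (σ (j+1))}).ncard + 1 ≤
          {j : ZMod m | ¬ G.Adj (σ (-1)) (σ j)}.ncard +
          {j : ZMod m | ¬ G.Adj (σ 0) (σ (j+1))}.ncard := by omega
      exact_mod_cast h2
    linarith
  have hlt : ({j : ZMod m | ¬ G.Adj (σ (-1)) (σ j)} ∪
      {j : ZMod m | ¬ G.Adj (σ 0) (σ (j+1))}).ncard < m := by
    have h1 : (({j : ZMod m | ¬ G.Adj (σ (-1)) (σ j)} ∪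
        {j : ZMod m | ¬ G.Adj (σ 0) (σ (j+1))}).ncard : ℝ) < (m : ℝ) := by linarith
    exact_mod_cast h1
  have hneuniv : {j : ZMod m | ¬ G.Adj (σ (-1)) (σ j)} ∪
      {j : ZMod m | ¬ G.Adj (σ 0) (σ (j+1))} ≠ Set.univ := by
    intro h
    rw [h, Set.ncard_univ, Nat.card_eq_fintype_card, ZMod.card] at hlt
    omega
  obtain ⟨jj, hjj⟩ := (Set.ne_univ_iff_exists_notMem _).mp hneuniv
  rw [Set.mem_union, not_or] at hjj
  have hadj1 : G.Adj (σ (-1)) (σ jj) := not_not.mp hjj.1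
  have hadj2 : G.Adj (σ 0) (σ (jj + 1)) := not_not.mp hjj.2
  set j' := jj.val with hj'
  have hj'm : j' < m := ZMod.val_lt jj
  have hj'0 : 1 ≤ j' := by
    by_contra h
    have h0 : jj = 0 := (ZMod.val_eq_zero jj).mp (by omega)
    exact hbp (h0 ▸ hadj1)
  have hjne : jj ≠ -1 := fun h => G.loopless.irrefl _ (h ▸ hadj1)
  have hj'top : j' ≤ m - 2 := by
    by_contra h
    have h1 : j' = m - 1 := by omega
    apply hjne
    rw [← hcast jj, ← hj', h1, hneg1]
  -- the reversal map
  set ρ : ZMod m → ZMod m :=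
    fun k => if k.val ≤ j' then ((j' - k.val : ℕ) : ZMod m) else k with hρ
  have hρle : ∀ k : ZMod m, k.val ≤ j' → ρ k = ((j' - k.val : ℕ) : ZMod m) := by
    intro k h; simp only [hρ]; rw [if_pos h]
  have hρgt : ∀ k : ZMod m, j' < k.val → ρ k = k := by
    intro k h; simp only [hρ]; rw [if_neg (by omega)]
  have hρval : ∀ k : ZMod m, k.val ≤ j' → (ρ k).val = j' - k.val := by
    intro k h; rw [hρle k h, ZMod.val_cast_of_lt (by omega)]
  have hρinv : Function.Involutive ρ := by
    intro k
    by_cases h : k.val ≤ j'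
    · have h1 := hρval k h
      rw [hρle (ρ k) (by omega), h1]
      have h2 : j' - (j' - k.val) = k.val := by omega
      rw [h2, hcast]
    · rw [hρgt k (by omega), hρgt k (by omega)]
  refine ⟨σ ∘ ρ, hσ.comp hρinv.injective, ?_⟩
  -- swap map on bad positions
  set φ : ZMod m → ZMod m :=
    fun k => if k.val < j' then ((j' - 1 - k.val : ℕ) : ZMod m) else k with hφ
  have hφlt : ∀ k : ZMod m, k.val < j' → φ k = ((j' - 1 - k.val : ℕ) : ZMod m) := by
    intro k h; simp only [hφ]; rw [if_pos h]
  have hφge : ∀ k : ZMod m, ¬ (k.val < j') → φ k = k := by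
    intro k h; simp only [hφ]; rw [if_neg h]
  have hmain : ∀ k : ZMod m, ¬ G.Adj ((σ ∘ ρ) k) ((σ ∘ ρ) (k+1)) →
      k.val ≠ j' ∧ ¬ G.Adj (σ (φ k)) (σ (φ k + 1)) ∧ φ k ≠ -1 := by
    intro k hk
    rcases lt_trichotomy k.val j' with h | h | h
    · -- k.val < j'
      have hk1 : (k+1).val = k.val + 1 := hsucc k (by omega)
      have e1 : (σ ∘ ρ) k = σ (((j' - 1 - k.val) + 1 : ℕ) : ZMod m) := by
        simp only [Function.comp_apply]
        rw [hρle k h.le]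
        congr 2
        omega
      have e2 : (σ ∘ ρ) (k+1) = σ ((j' - 1 - k.val : ℕ) : ZMod m) := by
        simp only [Function.comp_apply]
        rw [hρle (k+1) (by rw [hk1]; omega), hk1]
        congr 2
        omega
      refine ⟨by omega, ?_, ?_⟩
      · rw [hφlt k h]
        have h2 : ((j' - 1 - k.val : ℕ) : ZMod m) + 1 = (((j' - 1 - k.val) + 1 : ℕ) : ZMod m) := by
          rw [Nat.cast_add_one]
        rw [h2]
        intro hadj
        apply hk
        rw [e1, e2]
        exact hadj.symm
      · rw [hφlt k h]
        intro hEq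
        have h3 := ZMod.val_cast_of_lt (show j' - 1 - k.val < m by omega)
        rw [hEq, hvneg] at h3
        omega
    · -- k.val = j' : impossible
      exfalso
      have hkj : k = jj := by
        rw [← hcast k, h, hj', hcast]
      apply hk
      have e1 : (σ ∘ ρ) k = σ 0 := by
        simp only [Function.comp_apply]
        rw [hρle k h.le, h, Nat.sub_self, Nat.cast_zero]
      have hk1 : (k+1).val = k.val + 1 := hsucc k (by omega)
      have e2 : (σ ∘ ρ) (k+1) = σ (jj + 1) := by
        simp only [Function.comp_apply]
        rw [hρgt (k+1) (by rw [hk1]; omega), hkj]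
      rw [e1, e2]
      exact hadj2
    · -- j' < k.val
      by_cases htop : k.val = m - 1
      · exfalso
        have hk1 : k = -1 := by rw [← hcast k, htop, hneg1]
        apply hk
        have e1 : (σ ∘ ρ) k = σ (-1) := by
          simp only [Function.comp_apply]
          rw [hρgt k (by omega), hk1]
        have e2 : (σ ∘ ρ) (k+1) = σ jj := by
          simp only [Function.comp_apply]
          rw [hk1, neg_add_cancel, hρle 0 (by rw [ZMod.val_zero]; omega),
            ZMod.val_zero, Nat.sub_zero, hj', hcast]
        rw [e1, e2]
        exact hadj1
      · have hklt : k.val < m := ZMod.val_lt k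
        have hk1 : (k+1).val = k.val + 1 := hsucc k (by omega)
        have e1 : (σ ∘ ρ) k = σ k := by
          simp only [Function.comp_apply]; rw [hρgt k h]
        have e2 : (σ ∘ ρ) (k+1) = σ (k+1) := by
          simp only [Function.comp_apply]; rw [hρgt (k+1) (by rw [hk1]; omega)]
        refine ⟨by omega, ?_, ?_⟩
        · rw [hφge k (by omega)]
          intro hadj
          apply hk
          rw [e1, e2]
          exact hadj
        · rw [hφge k (by omega)]
          intro hEq
          have h3 := congrArg ZMod.val hEq
          rw [hvneg] at h3
          omega
  have hinjφ : Set.InjOn φ {k : ZMod m | ¬ G.Adj ((σ ∘ ρ) k) ((σ ∘ ρ) (k+1))} := by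
    intro a ha b hb hab
    have ha' := (hmain a ha).1
    have hb' := (hmain b hb).1
    by_cases h1 : a.val < j' <;> by_cases h2 : b.val < j'
    · have va : (φ a).val = j' - 1 - a.val := by
        rw [hφlt a h1, ZMod.val_cast_of_lt (by omega)]
      have vb : (φ b).val = j' - 1 - b.val := by
        rw [hφlt b h2, ZMod.val_cast_of_lt (by omega)]
      have h3 := congrArg ZMod.val hab
      rw [va, vb] at h3
      have h4 : a.val = b.val := by omega
      rw [← hcast a, h4, hcast]
    · exfalso
      have va : (φ a).val = j' - 1 - a.val := by
        rw [hφlt a h1, ZMod.val_cast_of_lt (by omega)]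
      have vb : (φ b).val = b.val := by rw [hφge b h2]
      have h3 := congrArg ZMod.val hab
      rw [va, vb] at h3
      omega
    · exfalso
      have va : (φ a).val = a.val := by rw [hφge a h1]
      have vb : (φ b).val = j' - 1 - b.val := by
        rw [hφlt b h2, ZMod.val_cast_of_lt (by omega)]
      have h3 := congrArg ZMod.val hab
      rw [va, vb] at h3
      omega
    · rw [hφge a h1, hφge b h2] at hab
      exact hab
  have hmemB : (-1 : ZMod m) ∈ {k : ZMod m | ¬ G.Adj (σ k) (σ (k+1))} := by
    show ¬ G.Adj (σ (-1)) (σ (-1 + 1))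
    rw [neg_add_cancel]
    exact hbp
  have hle : {k : ZMod m | ¬ G.Adj ((σ ∘ ρ) k) ((σ ∘ ρ) (k+1))}.ncard ≤
      ({k : ZMod m | ¬ G.Adj (σ k) (σ (k+1))} \ {(-1 : ZMod m)}).ncard := by
    apply Set.ncard_le_ncard_of_injOn φ _ hinjφ (Set.toFinite _)
    intro k hk
    exact ⟨(hmain k hk).2.1, by simpa using (hmain k hk).2.2⟩
  exact lt_of_le_of_lt hle (Set.ncard_diff_singleton_lt_of_mem hmemB (Set.toFinite _))


lemma existsA {V : Type*} [Fintype V] {G : SimpleGraph V} {c : ℝ} {m : ℕ} (hm : 3 ≤ m)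
    (hM : ∀ v : V, ({u : V | u ≠ v ∧ ¬ G.Adj v u}.ncard : ℝ) ≤ c)
    (h2c : 2 * c + 2 ≤ (m : ℝ)) (hmn : m ≤ Fintype.card V) :
    ∃ σ : ZMod m → V, Function.Injective σ ∧ ∀ k, G.Adj (σ k) (σ (k+1)) := by
  classical
  haveI : NeZero m := ⟨by omega⟩
  have hcard : Fintype.card (ZMod m) ≤ Fintype.card V := by
    rw [ZMod.card]; exact hmn
  obtain ⟨e⟩ := Function.Embedding.nonempty_of_card_le hcard
  set S : Set ℕ := {b : ℕ | ∃ σ : ZMod m → V, Function.Injective σ ∧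
    {k : ZMod m | ¬ G.Adj (σ k) (σ (k+1))}.ncard = b} with hS
  have hSne : S.Nonempty := ⟨_, e, e.injective, rfl⟩
  obtain ⟨σ0, hσ0, hb0⟩ := Nat.sInf_mem hSne
  refine ⟨σ0, hσ0, ?_⟩
  have hzero : {k : ZMod m | ¬ G.Adj (σ0 k) (σ0 (k+1))} = ∅ := by
    by_contra h
    obtain ⟨i, hi⟩ := Set.nonempty_iff_ne_empty.mpr h
    have hi' : ¬ G.Adj (σ0 i) (σ0 (i+1)) := hi
    set τ : ZMod m → V := fun k => σ0 (k + (i+1)) with hτ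
    have hτinj : Function.Injective τ := hσ0.comp (add_left_injective (i+1))
    have hτbp : ¬ G.Adj (τ (-1)) (τ 0) := by
      have e1 : τ (-1) = σ0 i := by
        simp only [hτ]
        congr 1
        ring
      have e2 : τ 0 = σ0 (i+1) := by
        simp only [hτ]
        congr 1
        ring
      rw [e1, e2]
      exact hi'
    have hrot : {k : ZMod m | ¬ G.Adj (τ k) (τ (k+1))} =
        (fun k => k - (i+1)) '' {k : ZMod m | ¬ G.Adj (σ0 k) (σ0 (k+1))} := by
      ext k
      simp only [Set.mem_setOf_eq, Set.mem_image, hτ]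
      constructor
      · intro hk
        refine ⟨k + (i+1), ?_, by ring⟩
        have e1 : k + (i+1) + 1 = k + 1 + (i+1) := by ring
        rw [e1]
        exact hk
      · rintro ⟨l, hl, rfl⟩
        have e1 : l - (i+1) + (i+1) = l := by ring
        have e2 : l - (i+1) + 1 + (i+1) = l + 1 := by ring
        rw [e1, e2]
        exact hl
    have hrotc : {k : ZMod m | ¬ G.Adj (τ k) (τ (k+1))}.ncard =
        {k : ZMod m | ¬ G.Adj (σ0 k) (σ0 (k+1))}.ncard := by
      rw [hrot, Set.ncard_image_of_injective _ (sub_left_injective)]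
    obtain ⟨σ', hσ', hlt⟩ := swapLemma hm hM h2c τ hτinj hτbp
    have hmem : {k : ZMod m | ¬ G.Adj (σ' k) (σ' (k+1))}.ncard ∈ S := ⟨σ', hσ', rfl⟩
    have := Nat.sInf_le hmem
    omega
  intro k
  by_contra h
  have : k ∈ {k : ZMod m | ¬ G.Adj (σ0 k) (σ0 (k+1))} := h
  rw [hzero] at this
  exact this


/-- A `c`-almost-complete graph on `n` vertices contains cycles of every length `m` with
`max {3, 2c + 2} ≤ m ≤ n`. -/
theorem almost_complete_pancyclic {V : Type*} [Fintype V] (G : SimpleGraph V) (c : ℝ) (n : ℕ)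
    (hc : 0 ≤ c) (hn : Fintype.card V = n)
    (hdeg : ∀ v : V, ((n : ℝ) - 1) - c ≤ (ndeg G v : ℝ))
    (m : ℕ) (hm3 : 3 ≤ m) (hmc : 2 * c + 2 ≤ (m : ℝ)) (hmn : m ≤ n) :
    HasCycleLen G m := by
  classical
  haveI : NeZero m := ⟨by omega⟩
  have hM : ∀ v : V, ({u : V | u ≠ v ∧ ¬ G.Adj v u}.ncard : ℝ) ≤ c := by
    intro v
    have hpart : (Set.univ : Set V) = ({v} ∪ {u : V | G.Adj v u}) ∪ {u : V | u ≠ v ∧ ¬ G.Adj v u} := by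
      ext u
      simp only [Set.mem_univ, Set.mem_union, Set.mem_singleton_iff, Set.mem_setOf_eq, true_iff]
      by_cases h1 : u = v
      · exact Or.inl (Or.inl h1)
      · by_cases h2 : G.Adj v u
        · exact Or.inl (Or.inr h2)
        · exact Or.inr ⟨h1, h2⟩
    have hd1 : Disjoint ({v} : Set V) {u : V | G.Adj v u} := by
      rw [Set.disjoint_left]
      rintro a rfl hb
      exact G.loopless.irrefl _ hb
    have hd2 : Disjoint (({v} : Set V) ∪ {u : V | G.Adj v u}) {u : V | u ≠ v ∧ ¬ G.Adj v u} := by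
      rw [Set.disjoint_left]
      rintro a (rfl | ha) hb
      · exact hb.1 rfl
      · exact hb.2 ha
    have hn' : n = 1 + ndeg G v + {u : V | u ≠ v ∧ ¬ G.Adj v u}.ncard := by
      have h1 : n = (Set.univ : Set V).ncard := by
        rw [Set.ncard_univ, Nat.card_eq_fintype_card, hn]
      rw [h1, hpart, Set.ncard_union_eq hd2 (Set.toFinite _) (Set.toFinite _),
        Set.ncard_union_eq hd1 (Set.toFinite _) (Set.toFinite _), Set.ncard_singleton]
      rfl
    have hdv := hdeg v
    have hcast : (n : ℝ) = 1 + (ndeg G v : ℝ) + ({u : V | u ≠ v ∧ ¬ G.Adj v u}.ncard : ℝ) := by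
      exact_mod_cast hn'
    linarith
  obtain ⟨σ, hσinj, hσadj⟩ := existsA hm3 hM hmc (by rw [hn]; exact hmn)
  apply auxB hm3 (fun k : ℕ => σ ((k : ℕ) : ZMod m))
  · intro a ha b hb hab
    have h1 := congrArg ZMod.val (hσinj hab)
    rwa [ZMod.val_cast_of_lt ha, ZMod.val_cast_of_lt hb] at h1
  · intro i hi
    have h1 : ((i + 1 : ℕ) : ZMod m) = ((i : ℕ) : ZMod m) + 1 := by push_cast; ring
    rw [h1]
    exact hσadj _
  · have h0 : ((m - 1 : ℕ) : ZMod m) + 1 = ((0 : ℕ) : ZMod m) := by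
      rw [← Nat.cast_add_one, show m - 1 + 1 = m by omega, ZMod.natCast_self, Nat.cast_zero]
    have h1 := hσadj ((m - 1 : ℕ) : ZMod m)
    rwa [h0] at h1
end

section
/- Let c ≥ 0 be a real number and let G = G[X,Y] be a c-almost-complete bipartite graph with parts X and Y. Then for every even integer m with max{4, 4c + 2} ≤ m ≤ 2·min{|X|, |Y|}, G contains a cycle on exactly m vertices. -/
open SimpleGraph

section Helpers

open List

variable {V : Type*}


/-- Build a walk from a chain. -/
def mkWalk (G : SimpleGraph V) : (x : V) → (l : List V) → (u : V) →
    List.IsChain G.Adj (x :: (l ++ [u])) → G.Walk x u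
  | _, [], _, h => SimpleGraph.Walk.cons (List.isChain_cons_cons.mp h).1 SimpleGraph.Walk.nil
  | _, a :: t, u, h =>
    SimpleGraph.Walk.cons (List.isChain_cons_cons.mp h).1 (mkWalk G a t u (List.isChain_cons_cons.mp h).2)

lemma mkWalk_length (G : SimpleGraph V) (x : V) (l : List V) (u : V)
    (h : List.IsChain G.Adj (x :: (l ++ [u]))) : (mkWalk G x l u h).length = l.length + 1 := by
  induction l generalizing x with
  | nil => simp [mkWalk]
  | cons a t ih => simp [mkWalk, ih]

lemma mkWalk_support (G : SimpleGraph V) (x : V) (l : List V) (u : V)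
    (h : List.IsChain G.Adj (x :: (l ++ [u]))) : (mkWalk G x l u h).support = x :: (l ++ [u]) := by
  induction l generalizing x with
  | nil => simp [mkWalk]
  | cons a t ih => simp [mkWalk, ih]

lemma edges_mem_length_one {G : SimpleGraph V} {a b : V} (p : G.Walk a b)
    (hp : p.support.Nodup) (he : s(b, a) ∈ p.edges) : p.length = 1 := by
  induction p with
  | nil => simp at he
  | @cons u x w hadj q ih =>
    rw [SimpleGraph.Walk.support_cons, List.nodup_cons] at hp
    rw [SimpleGraph.Walk.edges_cons, List.mem_cons] at he
    rcases he with he | he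
    · rw [Sym2.eq_iff] at he
      have hux : w = x := by
        rcases he with ⟨h1, h2⟩ | ⟨h1, h2⟩
        · exact absurd (h2 ▸ hadj) G.irrefl
        · exact h1
      cases q with
      | nil => simp
      | @cons _ y' _ h' q' =>
        have h1 : w ∈ q'.support := SimpleGraph.Walk.end_mem_support q'
        have h2 := hp.2
        rw [SimpleGraph.Walk.support_cons, List.nodup_cons] at h2
        exact absurd (hux ▸ h1) h2.1
    · exact absurd (SimpleGraph.Walk.snd_mem_support_of_mem_edges q he) hp.1

lemma hasCycle_of_list (G : SimpleGraph V) (C : List V) (h3 : 3 ≤ C.length)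
    (hnd : C.Nodup) (hch : C.IsChain G.Adj)
    (hcl : ∀ x ∈ C.getLast?, ∀ y ∈ C.head?, G.Adj x y) : HasCycleLen G C.length := by
  obtain ⟨x, a, t, rfl⟩ : ∃ x a t, C = x :: a :: t :=
    match C, h3 with | x :: a :: t, _ => ⟨x, a, t, rfl⟩
  have hxa : G.Adj x a := (List.isChain_cons_cons.mp hch).1
  have hch2 : List.IsChain G.Adj (a :: t) := (List.isChain_cons_cons.mp hch).2
  have hchain : List.IsChain G.Adj (a :: (t ++ [x])) := by
    have h1 : List.IsChain G.Adj ((a :: t) ++ [x]) := by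
      rw [List.isChain_append]
      refine ⟨hch2, List.isChain_singleton x, ?_⟩
      intro p hp q hq
      simp only [List.head?_cons, Option.mem_def, Option.some.injEq] at hq
      subst hq
      exact hcl p (by simpa using hp) x rfl
    exact h1
  set p := mkWalk G a t x hchain with hp
  have hsupp : p.support = a :: (t ++ [x]) := mkWalk_support G a t x hchain
  have hsuppnd : p.support.Nodup := by
    rw [hsupp]
    have : (a :: (t ++ [x])).Perm (x :: a :: t) := by
      refine List.Perm.trans ?_ (List.perm_append_comm (l₁ := [a] ++ t) (l₂ := [x]))
      simp
    exact this.nodup_iff.mpr hnd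
  have hpath : p.IsPath := SimpleGraph.Walk.IsPath.mk' hsuppnd
  have hlen : p.length = t.length + 1 := mkWalk_length G a t x hchain
  refine ⟨x, SimpleGraph.Walk.cons hxa p, ?_, ?_⟩
  · rw [SimpleGraph.Walk.cons_isCycle_iff]
    refine ⟨hpath, fun hmem => ?_⟩
    have := edges_mem_length_one p hsuppnd hmem
    simp only [List.length_cons] at h3
    omega
  · simp [hlen]

/-- count of evens/odds in range -/
lemma card_range_mod2 (n : ℕ) :
    ((Finset.range n).filter (fun i => i % 2 = 0)).card = (n + 1) / 2 ∧
    ((Finset.range n).filter (fun i => i % 2 = 1)).card = n / 2 := by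
  induction n with
  | zero => simp
  | succ n ih =>
    rw [Finset.range_add_one, Finset.filter_insert, Finset.filter_insert]
    rcases Nat.even_or_odd n with he | ho
    · have h0 : n % 2 = 0 := Nat.even_iff.mp he
      rw [if_pos h0, if_neg (by omega), Finset.card_insert_of_notMem (by simp)]
      omega
    · have h1 : n % 2 = 1 := Nat.odd_iff.mp ho
      rw [if_neg (by omega), if_pos h1, Finset.card_insert_of_notMem (by simp)]
      omega

lemma flip_adj (G : SimpleGraph V) : flip G.Adj = G.Adj := by
  ext u v
  exact ⟨fun h => h.symm, fun h => h.symm⟩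
lemma inner_lemma [DecidableEq V] (G : SimpleGraph V) [DecidableRel G.Adj] (A B : Finset V) (k : ℕ)
    (hk : 2 ≤ k) (hAB : Disjoint A B) (hcA : A.card = k) (hcB : B.card = k)
    (hbipA : ∀ a ∈ A, ∀ u, G.Adj a u → u ∈ A ∪ B → u ∈ B)
    (hbipB : ∀ b ∈ B, ∀ u, G.Adj b u → u ∈ A ∪ B → u ∈ A)
    (hdA : ∀ a ∈ A, k + 1 ≤ 2 * (B.filter (fun b => G.Adj a b)).card)
    (hdB : ∀ b ∈ B, k + 1 ≤ 2 * (A.filter (fun a => G.Adj b a)).card)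
    (l : List V) (hnd : l.Nodup) (hch : l.IsChain G.Adj) (hmem : ∀ x ∈ l, x ∈ A ∪ B)
    (hmax : ∀ l' : List V, l'.Nodup → l'.IsChain G.Adj → (∀ x ∈ l', x ∈ A ∪ B) →
      l'.length ≤ l.length)
    (hne : l ≠ []) (hhd : l.head hne ∈ A) :
    ∃ C : List V, C ≠ [] ∧ C.length = 2 * k ∧ C.Nodup ∧ C.IsChain G.Adj ∧
      ∀ x ∈ C.getLast?, ∀ y ∈ C.head?, G.Adj x y := by
  classical
  have hn1 : 1 ≤ l.length := List.length_pos_iff.mpr hne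
  set v : ℕ → V := fun i => l.getD i (l.head hne) with hv
  -- basic index facts
  have hgetl : ∀ j, j < l.length → l[j]? = some (v j) := by
    intro j hj
    rw [List.getElem?_eq_getElem hj]
    have h1 : v j = l[j]'hj := List.getD_eq_getElem l _ hj
    rw [h1]
  have hvl : ∀ i, i < l.length → v i ∈ l := by
    intro i hi
    rw [hv]
    simp only [List.getD_eq_getElem _ _ hi]
    exact List.getElem_mem hi
  have hv0 : v 0 = l.head hne := by
    have h1 : l.head? = some (l.head hne) := List.head?_eq_head hne
    rw [List.head?_eq_getElem?, hgetl 0 (by omega)] at h1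
    exact (Option.some.inj h1)
  have hadj : ∀ i, i + 1 < l.length → G.Adj (v i) (v (i + 1)) := by
    intro i hi
    have h := List.isChain_iff_getElem.mp hch i (by omega)
    have e1 : v i = l[i]'(by omega) := List.getD_eq_getElem l _ (by omega)
    have e2 : v (i + 1) = l[i + 1]'hi := List.getD_eq_getElem l _ hi
    rw [e1, e2]
    simpa [List.get_eq_getElem] using h
  have hinj : ∀ i j, i < l.length → j < l.length → v i = v j → i = j := by
    intro i j hi hj hij
    have e1 : v i = l[i]'hi := List.getD_eq_getElem l _ hi
    have e2 : v j = l[j]'hj := List.getD_eq_getElem l _ hj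
    rw [e1, e2] at hij
    exact (hnd.getElem_inj_iff).mp hij
  have hidxv : ∀ x ∈ l, l.idxOf x < l.length ∧ v (l.idxOf x) = x := by
    intro x hx
    have hlt : l.idxOf x < l.length := List.idxOf_lt_length_iff.mpr hx
    refine ⟨hlt, ?_⟩
    have e1 : v (l.idxOf x) = l[l.idxOf x]'hlt := List.getD_eq_getElem l _ hlt
    rw [e1]
    exact List.getElem_idxOf hlt
  -- parity
  have Hpar : ∀ i, i < l.length → (i % 2 = 0 → v i ∈ A) ∧ (i % 2 = 1 → v i ∈ B) := by
    intro i
    induction i with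
    | zero =>
      intro _
      exact ⟨fun _ => hv0 ▸ hhd, by omega⟩
    | succ i ih =>
      intro h
      have hi := ih (by omega)
      have ha := hadj i h
      have hmem' : v (i + 1) ∈ A ∪ B := hmem _ (hvl _ h)
      constructor
      · intro h0
        exact hbipB _ (hi.2 (by omega)) _ ha hmem'
      · intro h1
        exact hbipA _ (hi.1 (by omega)) _ ha hmem'
  have hApar : ∀ i, i < l.length → v i ∈ A → i % 2 = 0 := by
    intro i hi hiA
    by_contra h
    exact Finset.disjoint_left.mp hAB hiA ((Hpar i hi).2 (by omega))
  have hBpar : ∀ i, i < l.length → v i ∈ B → i % 2 = 1 := by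
    intro i hi hiB
    by_contra h
    exact Finset.disjoint_left.mp hAB ((Hpar i hi).1 (by omega)) hiB
  have hv0A : v 0 ∈ A := (Hpar 0 (by omega)).1 rfl
  have hn2k : l.length ≤ 2 * k := by
    have hsub : l.toFinset ⊆ A ∪ B := fun x hx => hmem x (List.mem_toFinset.mp hx)
    have h1 := Finset.card_le_card hsub
    rw [List.toFinset_card_of_nodup hnd, Finset.card_union_of_disjoint hAB, hcA, hcB] at h1
    omega
  -- maximality
  have M1 : ∀ u, G.Adj (v 0) u → u ∈ A ∪ B → u ∈ l := by
    intro u hadju humem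
    by_contra hul
    have hch' : (u :: l).IsChain G.Adj := by
      rw [List.isChain_cons]
      refine ⟨?_, hch⟩
      intro z hz
      rw [List.head?_eq_getElem?, hgetl 0 (by omega)] at hz
      simp only [Option.mem_def, Option.some.injEq] at hz
      exact hz ▸ hadju.symm
    have := hmax (u :: l) (List.nodup_cons.mpr ⟨hul, hnd⟩) hch'
      (by intro x hx; rcases List.mem_cons.mp hx with rfl | hx'; exacts [humem, hmem x hx'])
    simp at this
  have M2 : ∀ u, G.Adj (v (l.length - 1)) u → u ∈ A ∪ B → u ∈ l := by
    intro u hadju humem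
    by_contra hul
    have hch' : (l ++ [u]).IsChain G.Adj := by
      rw [List.isChain_append]
      refine ⟨hch, List.isChain_singleton u, ?_⟩
      intro x hx z hz
      rw [List.getLast?_eq_getElem?, hgetl (l.length - 1) (by omega)] at hx
      simp only [Option.mem_def, Option.some.injEq] at hx hz
      rw [List.head?_cons] at hz
      simp only [Option.some.injEq] at hz
      subst hx; subst hz
      exact hadju
    have := hmax (l ++ [u])
      (List.nodup_append'.mpr ⟨hnd, List.nodup_singleton u,
        by intro a ha hb; simp at hb; exact hul (hb ▸ ha)⟩)
      hch'
      (by intro x hx; rcases List.mem_append.mp hx with hx' | hx'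
          · exact hmem x hx'
          · simp at hx'; exact hx' ▸ humem)
    simp at this
  -- cardinal facts for A,B on the path
  have hAcap : (A ∩ l.toFinset).card = (l.length + 1) / 2 ∧
      (B ∩ l.toFinset).card = l.length / 2 := by
    have h1 : ((Finset.range l.length).filter (fun i => i % 2 = 0)).card ≤
        (A ∩ l.toFinset).card := by
      apply Finset.card_le_card_of_injOn v
      · intro i hi
        rw [Finset.mem_coe, Finset.mem_filter, Finset.mem_range] at hi
        rw [Finset.mem_coe, Finset.mem_inter, List.mem_toFinset]
        exact ⟨(Hpar i hi.1).1 hi.2, hvl i hi.1⟩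
      · intro i hi j hj hij
        simp only [Finset.coe_filter, Set.mem_setOf_eq, Finset.mem_range] at hi hj
        exact hinj i j hi.1 hj.1 hij
    have h2 : ((Finset.range l.length).filter (fun i => i % 2 = 1)).card ≤
        (B ∩ l.toFinset).card := by
      apply Finset.card_le_card_of_injOn v
      · intro i hi
        rw [Finset.mem_coe, Finset.mem_filter, Finset.mem_range] at hi
        rw [Finset.mem_coe, Finset.mem_inter, List.mem_toFinset]
        exact ⟨(Hpar i hi.1).2 hi.2, hvl i hi.1⟩
      · intro i hi j hj hij
        simp only [Finset.coe_filter, Set.mem_setOf_eq, Finset.mem_range] at hi hj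
        exact hinj i j hi.1 hj.1 hij
    have h3 : (A ∩ l.toFinset) ∪ (B ∩ l.toFinset) = l.toFinset := by
      ext x
      simp only [Finset.mem_union, Finset.mem_inter, List.mem_toFinset]
      constructor
      · rintro (⟨_, h⟩ | ⟨_, h⟩) <;> exact h
      · intro hx
        rcases Finset.mem_union.mp (hmem x hx) with h | h
        · exact Or.inl ⟨h, hx⟩
        · exact Or.inr ⟨h, hx⟩
    have h4 : Disjoint (A ∩ l.toFinset) (B ∩ l.toFinset) :=
      Finset.disjoint_left.mpr (fun x hx hx' =>
        Finset.disjoint_left.mp hAB (Finset.mem_inter.mp hx).1 (Finset.mem_inter.mp hx').1)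
    have h5 : (A ∩ l.toFinset).card + (B ∩ l.toFinset).card = l.length := by
      rw [← Finset.card_union_of_disjoint h4, h3, List.toFinset_card_of_nodup hnd]
    have h6 := (card_range_mod2 l.length).1
    have h7 := (card_range_mod2 l.length).2
    omega
  -- generic counting: neighbours of an endpoint land on the path
  have hcount : ∀ (x0 : V) (p : ℕ) (D : Finset V),
      (∀ i, i < l.length → v i ∈ D → i % 2 = p) →
      (∀ u ∈ D, G.Adj x0 u → u ∈ l) →
      (D.filter (fun u => G.Adj x0 u)).card ≤
        ((Finset.range l.length).filter (fun j => j % 2 = p ∧ G.Adj x0 (v j))).card := by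
    intro x0 p D hDpar hon
    apply Finset.card_le_card_of_injOn (fun u => l.idxOf u)
    · intro u hu
      rw [Finset.mem_coe, Finset.mem_filter] at hu
      have hul : u ∈ l := hon u hu.1 hu.2
      obtain ⟨hlt, hvu⟩ := hidxv u hul
      rw [Finset.mem_coe, Finset.mem_filter, Finset.mem_range]
      exact ⟨hlt, hDpar _ hlt (by rw [hvu]; exact hu.1), by rw [hvu]; exact hu.2⟩
    · intro u hu u' hu' heq
      simp only [Finset.coe_filter, Set.mem_setOf_eq] at hu hu'
      have h1 := (hidxv u (hon u hu.1 hu.2)).2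
      have h2 := (hidxv u' (hon u' hu'.1 hu'.2)).2
      have heq' : l.idxOf u = l.idxOf u' := heq
      rw [← h1, ← h2, heq']
  -- the head's neighbour positions
  have hT : k + 1 ≤ 2 * ((Finset.range l.length).filter
      (fun j => j % 2 = 1 ∧ G.Adj (v 0) (v j))).card := by
    have h1 := hdA (v 0) hv0A
    have h2 := hcount (v 0) 1 B hBpar
      (fun u hu ha => M1 u ha (Finset.mem_union_right _ hu))
    omega
  have hTsubOD : ((Finset.range l.length).filter (fun j => j % 2 = 1 ∧ G.Adj (v 0) (v j)))
      ⊆ (Finset.range l.length).filter (fun i => i % 2 = 1) := by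
    intro j hj
    rw [Finset.mem_filter] at hj ⊢
    exact ⟨hj.1, hj.2.1⟩
  have hnk1 : k + 1 ≤ l.length := by
    have h1 := Finset.card_le_card hTsubOD
    have h2 := (card_range_mod2 l.length).2
    omega
  -- ODD LENGTH IS IMPOSSIBLE
  have hneven : l.length % 2 = 0 := by
    by_contra hodd'
    have hodd : l.length % 2 = 1 := by omega
    obtain ⟨y, hy⟩ : (B \ (B ∩ l.toFinset)).Nonempty := by
      rw [← Finset.card_pos, Finset.card_sdiff_of_subset Finset.inter_subset_left, hcB, hAcap.2]
      omega
    rw [Finset.mem_sdiff] at hy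
    have hyB : y ∈ B := hy.1
    have hyl : y ∉ l := fun h => hy.2 (Finset.mem_inter.mpr ⟨hy.1, List.mem_toFinset.mpr h⟩)
    have hylast : ¬ G.Adj (v (l.length - 1)) y :=
      fun h => hyl (M2 y h (Finset.mem_union_right _ hyB))
    set S := (Finset.range l.length).filter (fun i => G.Adj y (v i)) with hS
    have hSA : ∀ i ∈ S, i % 2 = 0 ∧ i + 1 < l.length := by
      intro i hi
      rw [hS, Finset.mem_filter, Finset.mem_range] at hi
      have hviA : v i ∈ A := hbipB y hyB (v i) hi.2 (hmem _ (hvl _ hi.1))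
      have hpar0 := hApar i hi.1 hviA
      have hne' : i ≠ l.length - 1 := by
        intro h
        exact hylast (by rw [← h]; exact hi.2.symm)
      exact ⟨hpar0, by omega⟩
    have hScard : (A.filter (fun u => G.Adj y u)).card ≤ S.card + (k - (l.length + 1) / 2) := by
      have hsub : A.filter (fun u => G.Adj y u) ⊆
          ((A ∩ l.toFinset).filter (fun u => G.Adj y u)) ∪ (A \ (A ∩ l.toFinset)) := by
        intro u hu
        rw [Finset.mem_filter] at hu
        by_cases hul : u ∈ l.toFinset
        · exact Finset.mem_union_left _
            (Finset.mem_filter.mpr ⟨Finset.mem_inter.mpr ⟨hu.1, hul⟩, hu.2⟩)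
        · exact Finset.mem_union_right _
            (Finset.mem_sdiff.mpr ⟨hu.1, fun h => hul (Finset.mem_inter.mp h).2⟩)
      have h1 : ((A ∩ l.toFinset).filter (fun u => G.Adj y u)).card ≤ S.card := by
        apply Finset.card_le_card_of_injOn (fun u => l.idxOf u)
        · intro u hu
          rw [Finset.mem_coe, Finset.mem_filter, Finset.mem_inter, List.mem_toFinset] at hu
          obtain ⟨hlt, hvu⟩ := hidxv u hu.1.2
          rw [Finset.mem_coe, hS, Finset.mem_filter, Finset.mem_range]
          exact ⟨hlt, by rw [hvu]; exact hu.2⟩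
        · intro u hu u' hu' heq
          have hu2 : u ∈ l := by
            simp only [Finset.coe_filter, Set.mem_setOf_eq, Finset.mem_inter,
              List.mem_toFinset] at hu
            exact hu.1.2
          have hu2' : u' ∈ l := by
            simp only [Finset.coe_filter, Set.mem_setOf_eq, Finset.mem_inter,
              List.mem_toFinset] at hu'
            exact hu'.1.2
          have e1 := (hidxv u hu2).2
          have e2 := (hidxv u' hu2').2
          have heq' : l.idxOf u = l.idxOf u' := heq
          rw [← e1, ← e2, heq']
      have h2 : (A \ (A ∩ l.toFinset)).card = k - (l.length + 1) / 2 := by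
        rw [Finset.card_sdiff_of_subset Finset.inter_subset_left, hcA, hAcap.1]
      have h3 := Finset.card_le_card hsub
      have h4 := Finset.card_union_le ((A ∩ l.toFinset).filter (fun u => G.Adj y u))
        (A \ (A ∩ l.toFinset))
      omega
    have hyd := hdB y hyB
    set S' := S.image (· + 1) with hS'
    have hS'card : S'.card = S.card :=
      Finset.card_image_of_injective _ (fun a b h => by omega)
    have hS'sub : S' ⊆ (Finset.range l.length).filter (fun i => i % 2 = 1) := by
      intro j hj
      rw [hS', Finset.mem_image] at hj
      obtain ⟨i, hiS, rfl⟩ := hj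
      have := hSA i hiS
      rw [Finset.mem_filter, Finset.mem_range]
      omega
    have hAk : (l.length + 1) / 2 ≤ k := by
      have h : (A ∩ l.toFinset).card ≤ A.card := Finset.card_le_card Finset.inter_subset_left
      rw [hAcap.1, hcA] at h
      exact h
    have hid := Finset.card_union_add_card_inter S'
      ((Finset.range l.length).filter (fun j => j % 2 = 1 ∧ G.Adj (v 0) (v j)))
    have hcup := Finset.card_le_card (Finset.union_subset hS'sub hTsubOD)
    have hod := (card_range_mod2 l.length).2
    obtain ⟨j, hj⟩ := Finset.card_pos.mp (show 0 < (S' ∩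
        ((Finset.range l.length).filter (fun j => j % 2 = 1 ∧ G.Adj (v 0) (v j)))).card by omega)
    rw [Finset.mem_inter] at hj
    have hj1 := hj.1
    rw [hS', Finset.mem_image] at hj1
    obtain ⟨i, hiS, rfl⟩ := hj1
    have hiS2 := hiS
    rw [hS, Finset.mem_filter, Finset.mem_range] at hiS2
    have hAdjY : G.Adj y (v i) := hiS2.2
    have hjT := hj.2
    rw [Finset.mem_filter, Finset.mem_range] at hjT
    have hi1n : i + 1 < l.length := hjT.1
    -- build a longer path
    have hchsplit : IsChain G.Adj (l.take (i + 1)) ∧ IsChain G.Adj (l.drop (i + 1)) := by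
      have hch2 := hch
      rw [← List.take_append_drop (i + 1) l] at hch2
      have := List.isChain_append.mp hch2
      exact ⟨this.1, this.2.1⟩
    have htake_len : (l.take (i + 1)).length = i + 1 := by rw [List.length_take]; omega
    have htake_last : (l.take (i + 1)).getLast? = some (v i) := by
      rw [List.getLast?_eq_getElem?, htake_len]
      simp only [Nat.add_sub_cancel]
      rw [List.getElem?_take, if_pos (by omega)]
      exact hgetl i (by omega)
    have htake_head : (l.take (i + 1)).head? = some (v 0) := by
      rw [List.head?_eq_getElem?, List.getElem?_take, if_pos (by omega)]
      exact hgetl 0 (by omega)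
    have hdrop_head : (l.drop (i + 1)).head? = some (v (i + 1)) := by
      rw [List.head?_eq_getElem?, List.getElem?_drop]
      simpa using hgetl (i + 1) hi1n
    have hrev_ch : IsChain G.Adj (l.take (i + 1)).reverse := by
      rw [List.isChain_reverse]
      exact hchsplit.1.imp (fun _ _ h => h.symm)
    have hch2' : IsChain G.Adj ((l.take (i + 1)).reverse ++ l.drop (i + 1)) := by
      rw [List.isChain_append]
      refine ⟨hrev_ch, hchsplit.2, ?_⟩
      intro a ha b hb
      rw [List.getLast?_reverse, htake_head] at ha
      rw [hdrop_head] at hb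
      simp only [Option.mem_def, Option.some.injEq] at ha hb
      rw [← ha, ← hb]
      exact hjT.2.2
    have hL2head : ((l.take (i + 1)).reverse ++ l.drop (i + 1)).head? = some (v i) := by
      rw [List.head?_append, List.head?_reverse, htake_last]
      rfl
    have hperm : ((l.take (i + 1)).reverse ++ l.drop (i + 1)).Perm l := by
      conv_rhs => rw [← List.take_append_drop (i + 1) l]
      exact (List.reverse_perm _).append_right _
    have hchL : IsChain G.Adj (y :: ((l.take (i + 1)).reverse ++ l.drop (i + 1))) := by
      rw [List.isChain_cons]
      refine ⟨?_, hch2'⟩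
      intro z hz
      rw [hL2head] at hz
      simp only [Option.mem_def, Option.some.injEq] at hz
      rw [← hz]
      exact hAdjY
    have hnd2 : (y :: ((l.take (i + 1)).reverse ++ l.drop (i + 1))).Nodup :=
      List.nodup_cons.mpr ⟨fun h => hyl (hperm.mem_iff.mp h), hperm.nodup_iff.mpr hnd⟩
    have hmem2 : ∀ x ∈ y :: ((l.take (i + 1)).reverse ++ l.drop (i + 1)), x ∈ A ∪ B := by
      intro x hx
      rcases List.mem_cons.mp hx with rfl | hx'
      · exact Finset.mem_union_right _ hyB
      · exact hmem x (hperm.mem_iff.mp hx')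
    have hcontra := hmax _ hnd2 hchL hmem2
    rw [List.length_cons, hperm.length_eq] at hcontra
    omega
  -- EVEN CASE : build the cycle
  have hlastB : v (l.length - 1) ∈ B := (Hpar _ (by omega)).2 (by omega)
  set U := (Finset.range l.length).filter
    (fun i => i % 2 = 0 ∧ G.Adj (v (l.length - 1)) (v i)) with hUdef
  have hU : k + 1 ≤ 2 * U.card := by
    have h1 := hdB (v (l.length - 1)) hlastB
    have h2 := hcount (v (l.length - 1)) 0 A hApar
      (fun u hu ha => M2 u ha (Finset.mem_union_left _ hu))
    rw [hUdef]
    omega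
  set T := (Finset.range l.length).filter (fun j => j % 2 = 1 ∧ G.Adj (v 0) (v j)) with hTdef
  set T' := T.image (· - 1) with hT'def
  have hT'card : T'.card = T.card := by
    apply Finset.card_image_of_injOn
    intro a ha b hb h
    rw [Finset.mem_coe, hTdef, Finset.mem_filter] at ha hb
    have h' : a - 1 = b - 1 := h
    omega
  have hT'sub : T' ⊆ (Finset.range l.length).filter (fun i => i % 2 = 0) := by
    intro j hj
    rw [hT'def, Finset.mem_image] at hj
    obtain ⟨a, haT, rfl⟩ := hj
    rw [hTdef, Finset.mem_filter, Finset.mem_range] at haT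
    rw [Finset.mem_filter, Finset.mem_range]
    omega
  have hUsub : U ⊆ (Finset.range l.length).filter (fun i => i % 2 = 0) := by
    intro i hi
    rw [hUdef, Finset.mem_filter, Finset.mem_range] at hi
    rw [Finset.mem_filter, Finset.mem_range]
    exact ⟨hi.1, hi.2.1⟩
  have hev := (card_range_mod2 l.length).1
  have hid := Finset.card_union_add_card_inter T' U
  have hcup := Finset.card_le_card (Finset.union_subset hT'sub hUsub)
  obtain ⟨i0, hi0⟩ := Finset.card_pos.mp (show 0 < (T' ∩ U).card by omega)
  rw [Finset.mem_inter] at hi0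
  have hi0T := hi0.1
  rw [hT'def, Finset.mem_image] at hi0T
  obtain ⟨j, hjT, hji⟩ := hi0T
  rw [hTdef, Finset.mem_filter, Finset.mem_range] at hjT
  have hj2 : j = i0 + 1 := by omega
  subst hj2
  have hi0U := hi0.2
  rw [hUdef, Finset.mem_filter, Finset.mem_range] at hi0U
  have hadj0 : G.Adj (v 0) (v (i0 + 1)) := hjT.2.2
  have hadjl : G.Adj (v (l.length - 1)) (v i0) := hi0U.2.2
  have hi1n : i0 + 1 < l.length := hjT.1
  -- the cycle list
  have hchsplit : IsChain G.Adj (l.take (i0 + 1)) ∧ IsChain G.Adj (l.drop (i0 + 1)) := by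
    have hch2 := hch
    rw [← List.take_append_drop (i0 + 1) l] at hch2
    have := List.isChain_append.mp hch2
    exact ⟨this.1, this.2.1⟩
  have htake_len : (l.take (i0 + 1)).length = i0 + 1 := by rw [List.length_take]; omega
  have htake_last : (l.take (i0 + 1)).getLast? = some (v i0) := by
    rw [List.getLast?_eq_getElem?, htake_len]
    simp only [Nat.add_sub_cancel]
    rw [List.getElem?_take, if_pos (by omega)]
    exact hgetl i0 (by omega)
  have htake_head : (l.take (i0 + 1)).head? = some (v 0) := by
    rw [List.head?_eq_getElem?, List.getElem?_take, if_pos (by omega)]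
    exact hgetl 0 (by omega)
  have hdrop_head : (l.drop (i0 + 1)).head? = some (v (i0 + 1)) := by
    rw [List.head?_eq_getElem?, List.getElem?_drop]
    simpa using hgetl (i0 + 1) hi1n
  have hdrop_last : (l.drop (i0 + 1)).getLast? = some (v (l.length - 1)) := by
    rw [List.getLast?_eq_getElem?, List.length_drop, List.getElem?_drop]
    have harith : (i0 + 1) + (l.length - (i0 + 1) - 1) = l.length - 1 := by omega
    rw [harith]
    exact hgetl _ (by omega)
  have hdrev_ch : IsChain G.Adj (l.drop (i0 + 1)).reverse := by
    rw [List.isChain_reverse]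
    exact hchsplit.2.imp (fun _ _ h => h.symm)
  set C := l.take (i0 + 1) ++ (l.drop (i0 + 1)).reverse with hCdef
  have hCch : IsChain G.Adj C := by
    rw [hCdef, List.isChain_append]
    refine ⟨hchsplit.1, hdrev_ch, ?_⟩
    intro a ha b hb
    rw [htake_last] at ha
    rw [List.head?_reverse, hdrop_last] at hb
    simp only [Option.mem_def, Option.some.injEq] at ha hb
    rw [← ha, ← hb]
    exact hadjl.symm
  have hChead : C.head? = some (v 0) := by
    rw [hCdef, List.head?_append, htake_head]
    rfl
  have hClast : C.getLast? = some (v (i0 + 1)) := by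
    rw [hCdef, List.getLast?_append, List.getLast?_reverse, hdrop_head]
    rfl
  have hCperm : C.Perm l := by
    rw [hCdef]
    conv_rhs => rw [← List.take_append_drop (i0 + 1) l]
    exact List.Perm.append_left _ (List.reverse_perm _)
  have hCnd : C.Nodup := hCperm.nodup_iff.mpr hnd
  have hClen : C.length = l.length := hCperm.length_eq
  have hCne : C ≠ [] := by
    intro h
    rw [h] at hClen
    simp at hClen
    omega
  have hCcl : ∀ x ∈ C.getLast?, ∀ z ∈ C.head?, G.Adj x z := by
    intro x hx z hz
    rw [hClast] at hx
    rw [hChead] at hz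
    simp only [Option.mem_def, Option.some.injEq] at hx hz
    rw [← hx, ← hz]
    exact hadj0.symm
  -- the cycle is Hamiltonian
  have hfull : l.length = 2 * k := by
    by_contra hlt2k
    have hCfin : C.toFinset = l.toFinset := List.toFinset_eq_of_perm _ _ hCperm
    obtain ⟨w, hw⟩ : ((A ∪ B) \ l.toFinset).Nonempty := by
      rw [← Finset.card_pos,
        Finset.card_sdiff_of_subset (fun x hx => hmem x (List.mem_toFinset.mp hx)),
        Finset.card_union_of_disjoint hAB, hcA, hcB, List.toFinset_card_of_nodup hnd]
      omega
    rw [Finset.mem_sdiff] at hw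
    have hwl : w ∉ l := fun h => hw.2 (List.mem_toFinset.mpr h)
    have hexu : ∃ u ∈ l.toFinset, G.Adj w u := by
      by_contra hno
      push_neg at hno
      rcases Finset.mem_union.mp hw.1 with hwA | hwB
      · have hsub2 : B.filter (fun u => G.Adj w u) ⊆ B \ (B ∩ l.toFinset) := by
          intro u hu
          rw [Finset.mem_filter] at hu
          rw [Finset.mem_sdiff]
          exact ⟨hu.1, fun hmem' => hno u (Finset.mem_inter.mp hmem').2 hu.2⟩
        have h1 := Finset.card_le_card hsub2
        rw [Finset.card_sdiff_of_subset Finset.inter_subset_left, hcB, hAcap.2] at h1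
        have h2 := hdA w hwA
        omega
      · have hsub2 : A.filter (fun u => G.Adj w u) ⊆ A \ (A ∩ l.toFinset) := by
          intro u hu
          rw [Finset.mem_filter] at hu
          rw [Finset.mem_sdiff]
          exact ⟨hu.1, fun hmem' => hno u (Finset.mem_inter.mp hmem').2 hu.2⟩
        have h1 := Finset.card_le_card hsub2
        rw [Finset.card_sdiff_of_subset Finset.inter_subset_left, hcA, hAcap.1] at h1
        have h2 := hdB w hwB
        omega
    obtain ⟨u, hu_mem, hu_adj⟩ := hexu
    have huC : u ∈ C := by
      rw [← List.mem_toFinset, hCfin]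
      exact hu_mem
    have htC : C.idxOf u < C.length := List.idxOf_lt_length_iff.mpr huC
    have hCget : C[C.idxOf u]? = some u := by
      rw [List.getElem?_eq_getElem htC]
      exact congrArg some (List.getElem_idxOf htC)
    have hCsplit : IsChain G.Adj (C.take (C.idxOf u)) ∧ IsChain G.Adj (C.drop (C.idxOf u)) := by
      have hc2 := hCch
      rw [← List.take_append_drop (C.idxOf u) C] at hc2
      have := List.isChain_append.mp hc2
      exact ⟨this.1, this.2.1⟩
    have hdropC_head : (C.drop (C.idxOf u)).head? = some u := by
      rw [List.head?_eq_getElem?, List.getElem?_drop]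
      simpa using hCget
    have hdropC_last : (C.drop (C.idxOf u)).getLast? = some (v (i0 + 1)) := by
      rw [List.getLast?_eq_getElem?, List.length_drop, List.getElem?_drop]
      have harith : C.idxOf u + (C.length - C.idxOf u - 1) = C.length - 1 := by omega
      rw [harith, ← List.getLast?_eq_getElem?]
      exact hClast
    have hrot_ch : IsChain G.Adj (C.drop (C.idxOf u) ++ C.take (C.idxOf u)) := by
      rw [List.isChain_append]
      refine ⟨hCsplit.2, hCsplit.1, ?_⟩
      intro a ha b hb
      rw [hdropC_last] at ha
      rw [List.head?_eq_getElem?, List.getElem?_take] at hb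
      by_cases ht0 : 0 < C.idxOf u
      · rw [if_pos ht0] at hb
        have hC0 : C[0]? = some (v 0) := by
          rw [← List.head?_eq_getElem?]
          exact hChead
        rw [hC0] at hb
        simp only [Option.mem_def, Option.some.injEq] at ha hb
        rw [← ha, ← hb]
        exact hadj0.symm
      · rw [if_neg (by omega)] at hb
        simp at hb
    have hrotperm : (C.drop (C.idxOf u) ++ C.take (C.idxOf u)).Perm l := by
      have h1 : (C.drop (C.idxOf u) ++ C.take (C.idxOf u)).Perm C := by
        conv_rhs => rw [← List.take_append_drop (C.idxOf u) C]
        exact List.perm_append_comm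
      exact h1.trans hCperm
    have hch3 : IsChain G.Adj (w :: (C.drop (C.idxOf u) ++ C.take (C.idxOf u))) := by
      rw [List.isChain_cons]
      refine ⟨?_, hrot_ch⟩
      intro z hz
      rw [List.head?_append, hdropC_head] at hz
      have hor : (some u).or ((C.take (C.idxOf u)).head?) = some u := rfl
      rw [hor] at hz
      simp only [Option.mem_def, Option.some.injEq] at hz
      rw [← hz]
      exact hu_adj
    have hnd3 : (w :: (C.drop (C.idxOf u) ++ C.take (C.idxOf u))).Nodup :=
      List.nodup_cons.mpr ⟨fun h => hwl (hrotperm.mem_iff.mp h), hrotperm.nodup_iff.mpr hnd⟩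
    have hmem3 : ∀ x ∈ w :: (C.drop (C.idxOf u) ++ C.take (C.idxOf u)), x ∈ A ∪ B := by
      intro x hx
      rcases List.mem_cons.mp hx with rfl | hx'
      · exact hw.1
      · exact hmem x (hrotperm.mem_iff.mp hx')
    have hcontra := hmax _ hnd3 hch3 hmem3
    rw [List.length_cons, hrotperm.length_eq] at hcontra
    omega
  exact ⟨C, hCne, by rw [hClen, hfull], hCnd, hCch, hCcl⟩

lemma exists_cycle_list [DecidableEq V] (G : SimpleGraph V) [DecidableRel G.Adj]
    (A B : Finset V) (k : ℕ)
    (hk : 2 ≤ k) (hAB : Disjoint A B) (hcA : A.card = k) (hcB : B.card = k)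
    (hbipA : ∀ a ∈ A, ∀ u, G.Adj a u → u ∈ A ∪ B → u ∈ B)
    (hbipB : ∀ b ∈ B, ∀ u, G.Adj b u → u ∈ A ∪ B → u ∈ A)
    (hdA : ∀ a ∈ A, k + 1 ≤ 2 * (B.filter (fun b => G.Adj a b)).card)
    (hdB : ∀ b ∈ B, k + 1 ≤ 2 * (A.filter (fun a => G.Adj b a)).card) :
    ∃ C : List V, C ≠ [] ∧ C.length = 2 * k ∧ C.Nodup ∧ C.IsChain G.Adj ∧
      ∀ x ∈ C.getLast?, ∀ y ∈ C.head?, G.Adj x y := by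
  classical
  have lenbound : ∀ l : List V, l.Nodup → (∀ x ∈ l, x ∈ A ∪ B) → l.length ≤ 2 * k := by
    intro l hnd hmem
    have hsub : l.toFinset ⊆ A ∪ B := fun x hx => hmem x (List.mem_toFinset.mp hx)
    have h1 := Finset.card_le_card hsub
    rw [List.toFinset_card_of_nodup hnd, Finset.card_union_of_disjoint hAB, hcA, hcB] at h1
    omega
  obtain ⟨a, ha⟩ : A.Nonempty := by rw [← Finset.card_pos]; omega
  set Q : ℕ → Prop := fun n =>
    ∃ l : List V, l.Nodup ∧ l.IsChain G.Adj ∧ (∀ x ∈ l, x ∈ A ∪ B) ∧ l.length = n with hQdef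
  have hQ1 : Q 1 := ⟨[a], by simp, by simp,
    by intro x hx; simp at hx; exact hx ▸ Finset.mem_union_left _ ha, rfl⟩
  have hQb : ∀ n, Q n → n ≤ 2 * k := by
    rintro n ⟨l, h1, _, h3, h4⟩
    rw [← h4]
    exact lenbound l h1 h3
  obtain ⟨l, hnd, hch, hmem, hlen⟩ : Q (Nat.findGreatest Q (2 * k)) :=
    Nat.findGreatest_spec (hQb 1 hQ1) hQ1
  have hmax : ∀ l' : List V, l'.Nodup → l'.IsChain G.Adj → (∀ x ∈ l', x ∈ A ∪ B) →
      l'.length ≤ l.length := by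
    intro l' h1 h2 h3
    rw [hlen]
    exact Nat.le_findGreatest (lenbound l' h1 h3) ⟨l', h1, h2, h3, rfl⟩
  have hne : l ≠ [] := by
    intro h
    have h1 : (1 : ℕ) ≤ Nat.findGreatest Q (2 * k) := Nat.le_findGreatest (hQb 1 hQ1) hQ1
    rw [h] at hlen
    simp at hlen
    omega
  rcases Finset.mem_union.mp (hmem _ (List.head_mem hne)) with hh | hh
  · exact inner_lemma G A B k hk hAB hcA hcB hbipA hbipB hdA hdB l hnd hch hmem hmax hne hh
  · have hmem' : ∀ x ∈ l, x ∈ B ∪ A := by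
      intro x hx; rw [Finset.union_comm]; exact hmem x hx
    have hmax' : ∀ l' : List V, l'.Nodup → l'.IsChain G.Adj → (∀ x ∈ l', x ∈ B ∪ A) →
        l'.length ≤ l.length := by
      intro l' h1 h2 h3
      exact hmax l' h1 h2 (by intro x hx; rw [Finset.union_comm]; exact h3 x hx)
    exact inner_lemma G B A k hk hAB.symm hcB hcA
      (fun b hb u hadj humem => hbipB b hb u hadj (by rwa [Finset.union_comm] at humem))
      (fun b hb u hadj humem => hbipA b hb u hadj (by rwa [Finset.union_comm] at humem))
      hdB hdA l hnd hch hmem' hmax' hne hh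

end Helpers

/-- A `c`-almost-complete bipartite graph contains cycles of every even length `m` with
`max {4, 4c + 2} ≤ m ≤ 2 min {|X|, |Y|}`. -/
theorem almost_complete_bipartite_cycles {V : Type*} [Fintype V] (G : SimpleGraph V)
    (X Y : Finset V) (c : ℝ) (hc : 0 ≤ c)
    (hdisj : Disjoint X Y) (hcover : ∀ v : V, v ∈ X ∨ v ∈ Y)
    (hbip : ∀ u v : V, G.Adj u v → (u ∈ X ∧ v ∈ Y) ∨ (u ∈ Y ∧ v ∈ X))
    (hdX : ∀ x ∈ X, (Y.card : ℝ) - c ≤ (degIn G Y x : ℝ))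
    (hdY : ∀ y ∈ Y, (X.card : ℝ) - c ≤ (degIn G X y : ℝ))
    (m : ℕ) (hme : Even m) (hm4 : 4 ≤ m) (hmc : 4 * c + 2 ≤ (m : ℝ))
    (hmm : m ≤ 2 * min X.card Y.card) :
    HasCycleLen G m := by
  classical
  have hme' : m % 2 = 0 := Nat.even_iff.mp hme
  set k := m / 2 with hkdef
  have hm2k : m = 2 * k := by omega
  have hminX := min_le_left X.card Y.card
  have hminY := min_le_right X.card Y.card
  have hkX : k ≤ X.card := by omega
  have hkY : k ≤ Y.card := by omega
  obtain ⟨A, hAX, hcA⟩ := Finset.exists_subset_card_eq hkX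
  obtain ⟨B, hBY, hcB⟩ := Finset.exists_subset_card_eq hkY
  have hk2 : 2 ≤ k := by omega
  have hAB : Disjoint A B := hdisj.mono hAX hBY
  have hbipA : ∀ a ∈ A, ∀ u, G.Adj a u → u ∈ A ∪ B → u ∈ B := by
    intro a haA u hadj humem
    have haX : a ∈ X := hAX haA
    rcases hbip a u hadj with ⟨_, hY⟩ | ⟨hY, _⟩
    · rcases Finset.mem_union.mp humem with h | h
      · exact (Finset.disjoint_left.mp hdisj (hAX h) hY).elim
      · exact h
    · exact (Finset.disjoint_left.mp hdisj haX hY).elim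
  have hbipB : ∀ b ∈ B, ∀ u, G.Adj b u → u ∈ A ∪ B → u ∈ A := by
    intro b hbB u hadj humem
    have hbY : b ∈ Y := hBY hbB
    rcases hbip b u hadj with ⟨hX', _⟩ | ⟨_, hX'⟩
    · exact (Finset.disjoint_left.mp hdisj hX' hbY).elim
    · rcases Finset.mem_union.mp humem with h | h
      · exact h
      · exact (Finset.disjoint_left.mp hdisj hX' (hBY h)).elim
  have hmR : 4 * c + 2 ≤ 2 * (k : ℝ) := by
    have : ((m : ℕ) : ℝ) = 2 * (k : ℝ) := by rw [hm2k]; push_cast; ring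
    linarith [hmc, this.symm.le, this.le]
  have hdegen : ∀ (P Q : Finset V) (hPQ : Q ⊆ P) (hcQ : Q.card = k)
      (a : V), ((P.card : ℝ) - c ≤ ((P.filter (fun u => G.Adj a u)).card : ℝ)) →
      k + 1 ≤ 2 * (Q.filter (fun u => G.Adj a u)).card := by
    intro P Q hPQ hcQ a h1
    have hkP : k ≤ P.card := hcQ ▸ Finset.card_le_card hPQ
    have h3 : P.filter (fun u => G.Adj a u) ⊆ Q.filter (fun u => G.Adj a u) ∪ (P \ Q) := by
      intro u hu
      rw [Finset.mem_filter] at hu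
      by_cases hB : u ∈ Q
      · exact Finset.mem_union_left _ (Finset.mem_filter.mpr ⟨hB, hu.2⟩)
      · exact Finset.mem_union_right _ (Finset.mem_sdiff.mpr ⟨hu.1, hB⟩)
    have h4 := Finset.card_le_card h3
    have h5 := Finset.card_union_le (Q.filter (fun u => G.Adj a u)) (P \ Q)
    have h6 : (P \ Q).card = P.card - k := by rw [Finset.card_sdiff_of_subset hPQ, hcQ]
    have e1 : ((P.filter (fun u => G.Adj a u)).card : ℝ) ≤
        ((Q.filter (fun u => G.Adj a u)).card : ℝ) + ((P.card : ℝ) - k) := by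
      have e0 : (P.filter (fun u => G.Adj a u)).card ≤
          (Q.filter (fun u => G.Adj a u)).card + (P.card - k) := by omega
      have e2 : ((P.card - k : ℕ) : ℝ) = (P.card : ℝ) - k := by
        rw [Nat.cast_sub hkP]
      calc ((P.filter (fun u => G.Adj a u)).card : ℝ)
          ≤ (((Q.filter (fun u => G.Adj a u)).card + (P.card - k) : ℕ) : ℝ) := by
            exact_mod_cast e0
        _ = ((Q.filter (fun u => G.Adj a u)).card : ℝ) + ((P.card : ℝ) - k) := by
            push_cast [Nat.cast_sub hkP]; ring
    have hfin : ((k : ℝ) + 1) ≤ 2 * ((Q.filter (fun u => G.Adj a u)).card : ℝ) := by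
      linarith
    exact_mod_cast hfin
  have hdegIn : ∀ (P : Finset V) (a : V),
      (degIn G P a : ℝ) = ((P.filter (fun u => G.Adj a u)).card : ℝ) := by
    intro P a
    rw [degIn]
    congr 1
    have : {u : V | u ∈ P ∧ G.Adj a u} = ↑(P.filter (fun u => G.Adj a u)) := by
      ext u
      simp
    rw [this, Set.ncard_coe_finset]
  have hdA : ∀ a ∈ A, k + 1 ≤ 2 * (B.filter (fun b => G.Adj a b)).card := by
    intro a haA
    have h1 := hdX a (hAX haA)
    rw [hdegIn Y a] at h1
    exact hdegen Y B hBY hcB a h1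
  have hdB : ∀ b ∈ B, k + 1 ≤ 2 * (A.filter (fun a => G.Adj b a)).card := by
    intro b hbB
    have h1 := hdY b (hBY hbB)
    rw [hdegIn X b] at h1
    exact hdegen X A hAX hcA b h1
  obtain ⟨C, hCne, hClen, hCnd, hCch, hCcl⟩ :=
    exists_cycle_list G A B k hk2 hAB hcA hcB hbipA hbipB hdA hdB
  have hres := hasCycle_of_list G C (by omega) hCnd hCch hCcl
  rwa [hClen, ← hm2k] at hres
end

section
/- For any graph G on K vertices and any integer m with 3 ≤ m ≤ K, if the average degree of G is at least m, then G contains a connected-matching on at least m vertices. -/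
open SimpleGraph

private def MatchP {V : Type*} (G : SimpleGraph V) (S : Finset V) (M : Finset (V × V)) : Prop :=
  (∀ e ∈ M, G.Adj e.1 e.2 ∧ e.1 ∈ S ∧ e.2 ∈ S) ∧
  (∀ e ∈ M, ∀ f ∈ M, e ≠ f → e.1 ≠ f.1 ∧ e.1 ≠ f.2 ∧ e.2 ≠ f.1 ∧ e.2 ≠ f.2)

private lemma matching_count {V : Type*} [Fintype V] [DecidableEq V] (G : SimpleGraph V)
    [DecidableRel G.Adj] (S : Finset V) (M : Finset (V × V))
    (hP : MatchP G S M) (hmax : ∀ M', MatchP G S M' → M'.card ≤ M.card) :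
    ((S ×ˢ S).filter fun p => G.Adj p.1 p.2).card ≤ 2 * M.card * S.card := by
  classical
  obtain ⟨hP1, hP2⟩ := hP
  set T : Finset V := M.biUnion (fun e => ({e.1, e.2} : Finset V)) with hTdef
  have hmemT : ∀ v : V, v ∈ T ↔ ∃ e ∈ M, v = e.1 ∨ v = e.2 := by
    intro v
    simp [hTdef, Finset.mem_biUnion, Finset.mem_insert, Finset.mem_singleton]
  have hT1 : ∀ e ∈ M, e.1 ∈ T := fun e he => (hmemT e.1).2 ⟨e, he, Or.inl rfl⟩
  have hT2 : ∀ e ∈ M, e.2 ∈ T := fun e he => (hmemT e.2).2 ⟨e, he, Or.inr rfl⟩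
  have hTS : T ⊆ S := by
    intro v hv
    rw [hmemT] at hv
    obtain ⟨e, he, h | h⟩ := hv
    · exact h ▸ (hP1 e he).2.1
    · exact h ▸ (hP1 e he).2.2
  have hTcard : T.card = 2 * M.card := by
    rw [hTdef, Finset.card_biUnion]
    · have hc2 : ∀ e ∈ M, ({e.1, e.2} : Finset V).card = 2 := by
        intro e he
        rw [Finset.card_insert_of_notMem (by simp [(hP1 e he).1.ne]), Finset.card_singleton]
      rw [Finset.sum_congr rfl hc2, Finset.sum_const, smul_eq_mul, mul_comm]
    · intro e he f hf hef
      have h4 := hP2 e he f hf hef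
      simp only [Finset.disjoint_left, Finset.mem_insert, Finset.mem_singleton]
      rintro a (rfl | rfl) (h | h)
      exacts [h4.1 h, h4.2.1 h, h4.2.2.1 h, h4.2.2.2 h]
  set U : Finset V := S \ T with hUdef
  have hScard : U.card + T.card = S.card := Finset.card_sdiff_add_card_eq_card hTS
  have fact1 : ∀ u v : V, u ∈ S → v ∈ S → u ∉ T → v ∉ T → ¬ G.Adj u v := by
    intro u v hu hv hut hvt hadj
    have hnot : (u, v) ∉ M := fun h => hut (hT1 _ h)
    have hP' : MatchP G S (insert (u, v) M) := by
      constructor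
      · intro e he
        rcases Finset.mem_insert.1 he with rfl | he
        · exact ⟨hadj, hu, hv⟩
        · exact hP1 e he
      · intro e he f hf hef
        rcases Finset.mem_insert.1 he with rfl | he <;>
          rcases Finset.mem_insert.1 hf with rfl | hf
        · exact absurd rfl hef
        · exact ⟨fun h => hut ((show u = f.1 from h) ▸ hT1 f hf),
            fun h => hut ((show u = f.2 from h) ▸ hT2 f hf),
            fun h => hvt ((show v = f.1 from h) ▸ hT1 f hf),
            fun h => hvt ((show v = f.2 from h) ▸ hT2 f hf)⟩
        · exact ⟨fun h => hut ((show e.1 = u from h) ▸ hT1 e he),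
            fun h => hvt ((show e.1 = v from h) ▸ hT1 e he),
            fun h => hut ((show e.2 = u from h) ▸ hT2 e he),
            fun h => hvt ((show e.2 = v from h) ▸ hT2 e he)⟩
        · exact hP2 e he f hf hef
    have := hmax _ hP'
    rw [Finset.card_insert_of_notMem hnot] at this
    omega
  have fact2 : ∀ e ∈ M, ∀ u u' : V, u ∈ U → u' ∈ U → u ≠ u' →
      G.Adj e.1 u → G.Adj e.2 u' → False := by
    intro e he u u' hu hu' huu' hau hbu
    obtain ⟨huS, huT⟩ := Finset.mem_sdiff.1 hu
    obtain ⟨hu'S, hu'T⟩ := Finset.mem_sdiff.1 hu'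
    have hTu : ∀ x, x ∈ T → x ≠ u := fun x hx => ne_of_mem_of_not_mem hx huT
    have hTu' : ∀ x, x ∈ T → x ≠ u' := fun x hx => ne_of_mem_of_not_mem hx hu'T
    set M' : Finset (V × V) := insert (e.1, u) (insert (e.2, u') (M.erase e)) with hM'
    have herase : ∀ f ∈ M.erase e, f ∈ M ∧ f ≠ e := fun f hf =>
      ⟨Finset.mem_of_mem_erase hf, Finset.ne_of_mem_erase hf⟩
    have he1 := hT1 e he
    have he2 := hT2 e he
    have hP' : MatchP G S M' := by
      constructor
      · intro g hg
        rcases Finset.mem_insert.1 hg with rfl | hg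
        · exact ⟨hau, (hP1 e he).2.1, huS⟩
        rcases Finset.mem_insert.1 hg with rfl | hg
        · exact ⟨hbu, (hP1 e he).2.2, hu'S⟩
        · exact hP1 g (herase g hg).1
      · intro g hg f hf hgf
        rcases Finset.mem_insert.1 hg with rfl | hg
        · rcases Finset.mem_insert.1 hf with rfl | hf
          · exact absurd rfl hgf
          rcases Finset.mem_insert.1 hf with rfl | hf
          · exact ⟨(hP1 e he).1.ne, hTu' _ he1, (hTu _ he2).symm, huu'⟩
          · obtain ⟨hfM, hfe⟩ := herase f hf
            have h4 := hP2 e he f hfM (Ne.symm hfe)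
            exact ⟨h4.1, h4.2.1, (hTu _ (hT1 f hfM)).symm, (hTu _ (hT2 f hfM)).symm⟩
        rcases Finset.mem_insert.1 hg with rfl | hg
        · rcases Finset.mem_insert.1 hf with rfl | hf
          · exact ⟨(hP1 e he).1.ne.symm, hTu _ he2, (hTu' _ he1).symm, huu'.symm⟩
          rcases Finset.mem_insert.1 hf with rfl | hf
          · exact absurd rfl hgf
          · obtain ⟨hfM, hfe⟩ := herase f hf
            have h4 := hP2 e he f hfM (Ne.symm hfe)
            exact ⟨h4.2.2.1, h4.2.2.2, (hTu' _ (hT1 f hfM)).symm, (hTu' _ (hT2 f hfM)).symm⟩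
        · obtain ⟨hgM, hge⟩ := herase g hg
          have h4 := hP2 e he g hgM (Ne.symm hge)
          rcases Finset.mem_insert.1 hf with rfl | hf
          · exact ⟨h4.1.symm, hTu _ (hT1 g hgM), h4.2.1.symm, hTu _ (hT2 g hgM)⟩
          rcases Finset.mem_insert.1 hf with rfl | hf
          · exact ⟨h4.2.2.1.symm, hTu' _ (hT1 g hgM), h4.2.2.2.symm, hTu' _ (hT2 g hgM)⟩
          · exact hP2 g hgM f (herase f hf).1 hgf
    have hAnot : (e.1, u) ∉ insert (e.2, u') (M.erase e) := by
      simp only [Finset.mem_insert]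
      rintro (h | h)
      · exact huu' (congrArg Prod.snd h)
      · exact huT (hT2 _ (herase _ h).1)
    have hBnot : (e.2, u') ∉ M.erase e := fun h => hu'T (hT2 _ (herase _ h).1)
    have hcard : M'.card = M.card + 1 := by
      rw [hM', Finset.card_insert_of_notMem hAnot, Finset.card_insert_of_notMem hBnot,
        Finset.card_erase_of_mem he]
      have : 1 ≤ M.card := Finset.card_pos.2 ⟨e, he⟩
      omega
    have := hmax _ hP'
    omega
  have cross_bound : ∀ e ∈ M,
      ((({e.1, e.2} : Finset V) ×ˢ U).filter fun p => G.Adj p.1 p.2).card ≤ U.card + 1 := by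
    intro e he
    set Na := U.filter (fun x => G.Adj e.1 x) with hNa
    set Nb := U.filter (fun x => G.Adj e.2 x) with hNb
    have hsub : (({e.1, e.2} : Finset V) ×ˢ U).filter (fun p => G.Adj p.1 p.2)
        ⊆ ({e.1} ×ˢ Na) ∪ ({e.2} ×ˢ Nb) := by
      intro p hp
      simp only [Finset.mem_filter, Finset.mem_product, Finset.mem_insert,
        Finset.mem_singleton, Finset.mem_union, hNa, hNb] at hp ⊢
      rcases hp.1.1 with h | h
      · exact Or.inl ⟨h, hp.1.2, h ▸ hp.2⟩
      · exact Or.inr ⟨h, hp.1.2, h ▸ hp.2⟩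
    have hcard1 : ((({e.1, e.2} : Finset V) ×ˢ U).filter fun p => G.Adj p.1 p.2).card ≤
        Na.card + Nb.card := by
      refine (Finset.card_le_card hsub).trans ((Finset.card_union_le _ _).trans ?_)
      rw [Finset.card_product, Finset.card_product, Finset.card_singleton,
        Finset.card_singleton, one_mul, one_mul]
    have key : Na.card + Nb.card ≤ U.card + 1 := by
      rcases Finset.eq_empty_or_nonempty Na with h | ⟨u, hu⟩
      · rw [h, Finset.card_empty, zero_add]
        exact le_trans (Finset.card_le_card (Finset.filter_subset _ _)) (Nat.le_succ _)
      rcases Finset.eq_empty_or_nonempty Nb with h | ⟨u', hu'⟩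
      · rw [h, Finset.card_empty, add_zero]
        exact le_trans (Finset.card_le_card (Finset.filter_subset _ _)) (Nat.le_succ _)
      · have hall : ∀ x ∈ Na, ∀ y ∈ Nb, x = y := by
          intro x hx y hy
          by_contra hxy
          obtain ⟨hxU, hxadj⟩ := Finset.mem_filter.1 hx
          obtain ⟨hyU, hyadj⟩ := Finset.mem_filter.1 hy
          exact fact2 e he x y hxU hyU hxy hxadj hyadj
        have hNa1 : Na ⊆ {u'} := fun x hx => Finset.mem_singleton.2 (hall x hx u' hu')
        have hNb1 : Nb ⊆ {u} := fun y hy => Finset.mem_singleton.2 (hall u hu y hy).symm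
        have h1 := Finset.card_le_card hNa1
        have h2 := Finset.card_le_card hNb1
        have hU1 : 1 ≤ U.card := Finset.card_pos.2 ⟨u, (Finset.mem_filter.1 hu).1⟩
        simp only [Finset.card_singleton] at h1 h2
        omega
    exact hcard1.trans key
  set B := (S ×ˢ S).filter (fun p => G.Adj p.1 p.2) with hB
  set B1 := B.filter (fun p => p.1 ∈ T ∧ p.2 ∈ T) with hB1d
  set B2 := B.filter (fun p => p.1 ∈ T ∧ p.2 ∉ T) with hB2d
  set B3 := B.filter (fun p => p.1 ∉ T ∧ p.2 ∈ T) with hB3d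
  have hBsub : B ⊆ B1 ∪ B2 ∪ B3 := by
    intro p hp
    simp only [hB1d, hB2d, hB3d, Finset.mem_union, Finset.mem_filter]
    by_cases h1 : p.1 ∈ T <;> by_cases h2 : p.2 ∈ T
    · exact Or.inl (Or.inl ⟨hp, h1, h2⟩)
    · exact Or.inl (Or.inr ⟨hp, h1, h2⟩)
    · exact Or.inr ⟨hp, h1, h2⟩
    · obtain ⟨hpS, hadj⟩ := Finset.mem_filter.1 hp
      obtain ⟨h1S, h2S⟩ := Finset.mem_product.1 hpS
      exact absurd hadj (fact1 _ _ h1S h2S h1 h2)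
  have hB1 : B1.card ≤ T.card * T.card - T.card := by
    rw [← Finset.offDiag_card]
    apply Finset.card_le_card
    intro p hp
    obtain ⟨hpB, h1, h2⟩ := Finset.mem_filter.1 hp
    have hadj := (Finset.mem_filter.1 hpB).2
    exact Finset.mem_offDiag.2 ⟨h1, h2, hadj.ne⟩
  have hB2 : B2.card ≤ M.card * (U.card + 1) := by
    have hsub2 : B2 ⊆ M.biUnion
        (fun e => (({e.1, e.2} : Finset V) ×ˢ U).filter fun p => G.Adj p.1 p.2) := by
      intro p hp
      obtain ⟨hpB, h1, h2⟩ := Finset.mem_filter.1 hp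
      obtain ⟨hpS, hadj⟩ := Finset.mem_filter.1 hpB
      obtain ⟨h1S, h2S⟩ := Finset.mem_product.1 hpS
      obtain ⟨e, he, h⟩ := (hmemT p.1).1 h1
      refine Finset.mem_biUnion.2 ⟨e, he, Finset.mem_filter.2
        ⟨Finset.mem_product.2 ⟨?_, Finset.mem_sdiff.2 ⟨h2S, h2⟩⟩, hadj⟩⟩
      simp only [Finset.mem_insert, Finset.mem_singleton]
      exact h
    calc B2.card ≤ (M.biUnion
          (fun e => (({e.1, e.2} : Finset V) ×ˢ U).filter fun p => G.Adj p.1 p.2)).card :=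
        Finset.card_le_card hsub2
      _ ≤ ∑ e ∈ M, ((({e.1, e.2} : Finset V) ×ˢ U).filter fun p => G.Adj p.1 p.2).card :=
        Finset.card_biUnion_le
      _ ≤ ∑ _e ∈ M, (U.card + 1) := Finset.sum_le_sum cross_bound
      _ = M.card * (U.card + 1) := by rw [Finset.sum_const, smul_eq_mul]
  have hB3 : B3.card ≤ B2.card := by
    apply Finset.card_le_card_of_injOn Prod.swap
    · intro p hp
      obtain ⟨hpB, h1, h2⟩ := Finset.mem_filter.1 hp
      obtain ⟨hpS, hadj⟩ := Finset.mem_filter.1 hpB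
      obtain ⟨h1S, h2S⟩ := Finset.mem_product.1 hpS
      refine Finset.mem_filter.2 ⟨Finset.mem_filter.2
        ⟨Finset.mem_product.2 ⟨h2S, h1S⟩, hadj.symm⟩, h2, h1⟩
    · exact fun a _ b _ h => Prod.swap_injective h
  have htotal : B.card ≤ (T.card * T.card - T.card) +
      (M.card * (U.card + 1) + M.card * (U.card + 1)) := by
    have hu1 := Finset.card_le_card hBsub
    have hu2 := Finset.card_union_le (B1 ∪ B2) B3
    have hu3 := Finset.card_union_le B1 B2
    omega
  have harith : (T.card * T.card - T.card) +
      (M.card * (U.card + 1) + M.card * (U.card + 1)) ≤ 2 * M.card * S.card := by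
    rcases Nat.eq_zero_or_pos M.card with h0 | h0
    · rw [h0] at hTcard
      rw [hTcard, h0]
      simp
    · have hSc : S.card = U.card + 2 * M.card := by omega
      rw [hTcard, hSc]
      have h2 : 2 * M.card ≤ 2 * M.card * (2 * M.card) :=
        Nat.le_mul_of_pos_right _ (by omega)
      zify [h2]
      ring_nf
      nlinarith [sq_nonneg ((M.card : ℤ))]
  exact htotal.trans harith

open Classical in
private lemma component_bound {V : Type*} [Fintype V] [DecidableEq V] (G : SimpleGraph V)
    [DecidableRel G.Adj] (m : ℕ)
    (hcon : ¬ HasConnMatching G (m : ℝ)) (c : G.ConnectedComponent) :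
    ((Finset.univ.filter fun p : V × V =>
        G.Adj p.1 p.2 ∧ G.connectedComponentMk p.1 = c).card) ≤
      (m - 1) * (Finset.univ.filter fun v => G.connectedComponentMk v = c).card := by
  classical
  set S := Finset.univ.filter fun v => G.connectedComponentMk v = c with hS
  obtain ⟨M, hMmem, hMmax⟩ := Finset.exists_max_image
    ((Finset.univ : Finset (Finset (V × V))).filter (MatchP G S)) Finset.card
    ⟨∅, Finset.mem_filter.2 ⟨Finset.mem_univ _,
      ⟨fun e he => absurd he (Finset.notMem_empty e),
       fun e he => absurd he (Finset.notMem_empty e)⟩⟩⟩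
  have hMP : MatchP G S M := (Finset.mem_filter.1 hMmem).2
  have hmax' : ∀ M', MatchP G S M' → M'.card ≤ M.card := fun M' h =>
    hMmax M' (Finset.mem_filter.2 ⟨Finset.mem_univ _, h⟩)
  have hmkS : ∀ v, v ∈ S → G.connectedComponentMk v = c := fun v hv =>
    (Finset.mem_filter.1 hv).2
  have hIs : IsConnMatching G M := by
    refine ⟨fun e he => (hMP.1 e he).1, hMP.2, fun e he f hf => ?_⟩
    have h1 := hmkS _ (hMP.1 e he).2.1
    have h2 := hmkS _ (hMP.1 f hf).2.1
    exact SimpleGraph.ConnectedComponent.exact (h1.trans h2.symm)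
  have hlt : 2 * M.card < m := by
    by_contra hle
    push_neg at hle
    exact hcon ⟨M, hIs, by exact_mod_cast hle⟩
  have hsub : (Finset.univ.filter fun p : V × V =>
      G.Adj p.1 p.2 ∧ G.connectedComponentMk p.1 = c) ⊆
      (S ×ˢ S).filter fun p => G.Adj p.1 p.2 := by
    intro p hp
    obtain ⟨-, hadj, hpc⟩ := Finset.mem_filter.1 hp
    refine Finset.mem_filter.2 ⟨Finset.mem_product.2 ⟨?_, ?_⟩, hadj⟩
    · exact Finset.mem_filter.2 ⟨Finset.mem_univ _, hpc⟩
    · exact Finset.mem_filter.2 ⟨Finset.mem_univ _,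
        (SimpleGraph.ConnectedComponent.connectedComponentMk_eq_of_adj hadj).symm.trans hpc⟩
  calc (Finset.univ.filter fun p : V × V =>
        G.Adj p.1 p.2 ∧ G.connectedComponentMk p.1 = c).card
      ≤ ((S ×ˢ S).filter fun p => G.Adj p.1 p.2).card := Finset.card_le_card hsub
    _ ≤ 2 * M.card * S.card := matching_count G S M hMP hmax'
    _ ≤ (m - 1) * S.card := Nat.mul_le_mul_right _ (by omega)

/-- A graph on `K` vertices with average degree at least `m` (where `3 ≤ m ≤ K`) contains a
connected-matching on at least `m` vertices. -/
theorem avg_degree_connected_matching {V : Type*} [Fintype V] (G : SimpleGraph V) (m : ℕ)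
    (hm3 : 3 ≤ m) (hmK : m ≤ Fintype.card V)
    (havg : (m : ℝ) ≤ 2 * (G.edgeSet.ncard : ℝ) / (Fintype.card V : ℝ)) :
    HasConnMatching G (m : ℝ) := by
  classical
  by_contra hcon
  have hK0 : 0 < Fintype.card V := by omega
  have hedge : G.edgeSet.ncard = G.edgeFinset.card := by
    rw [← SimpleGraph.coe_edgeFinset, Set.ncard_coe_finset]
  have hreal : (m : ℝ) * (Fintype.card V : ℝ) ≤ 2 * (G.edgeFinset.card : ℝ) := by
    have h := (le_div_iff₀ (by exact_mod_cast hK0 : (0:ℝ) < (Fintype.card V : ℝ))).1 havg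
    rw [hedge] at h
    exact_mod_cast h
  have hnat : m * Fintype.card V ≤ 2 * G.edgeFinset.card := by exact_mod_cast hreal
  set A := (Finset.univ.filter fun (x, y) => G.Adj x y) with hA
  have h2e : 2 * G.edgeFinset.card = A.card := SimpleGraph.two_mul_card_edgeFinset G
  have hfib : A.card = ∑ c : G.ConnectedComponent,
      (A.filter fun p => G.connectedComponentMk p.1 = c).card :=
    Finset.card_eq_sum_card_fiberwise (fun x _ => Finset.mem_univ _)
  have hAc : ∀ c : G.ConnectedComponent, (A.filter fun p => G.connectedComponentMk p.1 = c) =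
      Finset.univ.filter fun p : V × V =>
        G.Adj p.1 p.2 ∧ G.connectedComponentMk p.1 = c := by
    intro c
    ext ⟨x, y⟩
    simp [hA, Finset.mem_filter]
  have hsum : ∑ c : G.ConnectedComponent,
      (Finset.univ.filter fun v => G.connectedComponentMk v = c).card = Fintype.card V := by
    rw [← Finset.card_univ]
    exact (Finset.card_eq_sum_card_fiberwise (fun x _ => Finset.mem_univ _)).symm
  have hchain : m * Fintype.card V ≤ (m - 1) * Fintype.card V := by
    calc m * Fintype.card V ≤ 2 * G.edgeFinset.card := hnat
      _ = A.card := h2e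
      _ = ∑ c : G.ConnectedComponent,
          (A.filter fun p => G.connectedComponentMk p.1 = c).card := hfib
      _ ≤ ∑ c : G.ConnectedComponent,
          (m - 1) * (Finset.univ.filter fun v => G.connectedComponentMk v = c).card := by
        refine Finset.sum_le_sum (fun c _ => ?_)
        rw [hAc c]
        exact component_bound G m hcon c
      _ = (m - 1) * ∑ c : G.ConnectedComponent,
          (Finset.univ.filter fun v => G.connectedComponentMk v = c).card := by
        rw [Finset.mul_sum]
      _ = (m - 1) * Fintype.card V := by rw [hsum]
  have hlt : (m - 1) * Fintype.card V < m * Fintype.card V :=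
    mul_lt_mul_of_pos_right (by omega) hK0
  exact absurd hchain (not_le.2 hlt)
end

section
/- Let G = G[V1, V2] be a bipartite graph with parts V1 and V2, and let ℓ be a positive integer with |V1| ≥ |V2| ≥ ℓ. If G is a-almost-complete for some a with 0 < a/ℓ < 0.5, then G contains a connected-matching on at least 2|V2| − 2a vertices. -/
open SimpleGraph

/-- An `a`-almost-complete bipartite graph with `|V₁| ≥ |V₂| ≥ ℓ` and `0 < a/ℓ < 1/2` contains
a connected-matching on at least `2|V₂| - 2a` vertices. -/
theorem almost_complete_bipartite_matching {V : Type*} (G : SimpleGraph V) (V₁ V₂ : Finset V)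
    (a : ℝ) (ℓ : ℕ) (hℓ : 0 < ℓ)
    (hdisj : Disjoint V₁ V₂)
    (hbip : ∀ u v : V, G.Adj u v → (u ∈ V₁ ∧ v ∈ V₂) ∨ (u ∈ V₂ ∧ v ∈ V₁))
    (h21 : V₂.card ≤ V₁.card) (hℓ2 : ℓ ≤ V₂.card)
    (ha0 : 0 < a / ℓ) (ha : a / ℓ < 0.5)
    (hd₁ : ∀ v ∈ V₁, (V₂.card : ℝ) - a ≤ (degIn G V₂ v : ℝ))
    (hd₂ : ∀ v ∈ V₂, (V₁.card : ℝ) - a ≤ (degIn G V₁ v : ℝ)) :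
    HasConnMatching G (2 * (V₂.card : ℝ) - 2 * a) := by
  classical
  have hℓ' : (0:ℝ) < ℓ := by exact_mod_cast hℓ
  have hℓ2' : (ℓ:ℝ) ≤ V₂.card := by exact_mod_cast hℓ2
  have h21' : (V₂.card:ℝ) ≤ V₁.card := by exact_mod_cast h21
  have hapos : 0 < a := by
    have := (div_pos_iff.mp ha0)
    rcases this with ⟨h1, _⟩ | ⟨_, h2⟩
    · exact h1
    · linarith
  have haV₂ : 2 * a < (V₂.card : ℝ) := by
    have : a < 0.5 * ℓ := by
      have := (div_lt_iff₀ hℓ').mp ha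
      linarith
    norm_num at this
    linarith
  -- degIn as a Finset card
  have hdeg : ∀ (S : Finset V) (v : V),
      degIn G S v = (S.filter fun u => G.Adj v u).card := by
    intro S v
    rw [degIn, ← Set.ncard_coe_finset]
    congr 1
    ext u
    simp
  -- partial matching predicate
  set P : Finset (V × V) → Prop := fun M =>
    (∀ e ∈ M, G.Adj e.1 e.2 ∧ e.1 ∈ V₁ ∧ e.2 ∈ V₂) ∧
    (∀ e ∈ M, ∀ f ∈ M, e ≠ f → e.1 ≠ f.1 ∧ e.2 ≠ f.2) with hP
  -- extension step
  have key : ∀ M : Finset (V × V), P M → (M.card : ℝ) < (V₂.card : ℝ) - a →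
      ∃ M' : Finset (V × V), P M' ∧ M'.card = M.card + 1 := by
    intro M hM hMcard
    obtain ⟨hM1, hM2⟩ := hM
    -- find an unmatched vertex of V₂
    have hsub₂ : M.image Prod.snd ⊆ V₂ := by
      intro x hx
      obtain ⟨e, he, rfl⟩ := Finset.mem_image.mp hx
      exact (hM1 e he).2.2
    have hcard₂ : (M.image Prod.snd).card < V₂.card := by
      have h1 : (M.image Prod.snd).card ≤ M.card := Finset.card_image_le
      have h2 : (M.card : ℝ) < V₂.card := by linarith
      have h3 : M.card < V₂.card := by exact_mod_cast h2
      omega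
    have hne : (V₂ \ M.image Prod.snd).Nonempty := by
      rw [← Finset.card_pos, Finset.card_sdiff_of_subset hsub₂]
      omega
    obtain ⟨w, hw⟩ := hne
    obtain ⟨hwV₂, hwun⟩ := Finset.mem_sdiff.mp hw
    -- neighbours of w in V₁ and unmatched vertices of V₁
    set Nw : Finset V := V₁.filter (fun u => G.Adj w u) with hNw
    set Im₁ : Finset V := M.image Prod.fst with hIm₁
    set U : Finset V := V₁ \ Im₁ with hU
    have hNwcard : (V₁.card : ℝ) - a ≤ Nw.card := by
      have := hd₂ w hwV₂
      rwa [hdeg V₁ w] at this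
    have hUcard : (V₁.card : ℝ) ≤ (U.card : ℝ) + M.card := by
      have hsub : V₁ ⊆ U ∪ Im₁ := by
        intro v hv
        by_cases h : v ∈ Im₁
        · exact Finset.mem_union_right _ h
        · exact Finset.mem_union_left _ (Finset.mem_sdiff.mpr ⟨hv, h⟩)
      have h1 : V₁.card ≤ U.card + Im₁.card :=
        le_trans (Finset.card_le_card hsub) (Finset.card_union_le _ _)
      have h2 : Im₁.card ≤ M.card := Finset.card_image_le
      have : V₁.card ≤ U.card + M.card := by omega
      exact_mod_cast this
    -- Nw ∩ U is nonempty
    have hinter : (Nw ∩ U).Nonempty := by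
      rw [← Finset.card_pos]
      by_contra h
      push_neg at h
      have h0 : (Nw ∩ U).card = 0 := by omega
      have hcup : (Nw ∪ U).card ≤ V₁.card := by
        apply Finset.card_le_card
        intro x hx
        rcases Finset.mem_union.mp hx with h | h
        · exact (Finset.mem_filter.mp h).1
        · exact (Finset.mem_sdiff.mp h).1
      have hsum := Finset.card_union_add_card_inter Nw U
      have hsum' : Nw.card + U.card ≤ V₁.card := by omega
      have hsum'' : (Nw.card : ℝ) + U.card ≤ V₁.card := by exact_mod_cast hsum'
      linarith
    obtain ⟨u, hu⟩ := hinter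
    have huNw : G.Adj w u := (Finset.mem_filter.mp (Finset.mem_inter.mp hu).1).2
    have huV₁ : u ∈ V₁ := (Finset.mem_filter.mp (Finset.mem_inter.mp hu).1).1
    have huIm : u ∉ Im₁ := (Finset.mem_sdiff.mp (Finset.mem_inter.mp hu).2).2
    refine ⟨insert (u, w) M, ⟨?_, ?_⟩, ?_⟩
    · intro e he
      rcases Finset.mem_insert.mp he with rfl | he
      · exact ⟨huNw.symm, huV₁, hwV₂⟩
      · exact hM1 e he
    · intro e he f hf hef
      have haux : ∀ g ∈ M, u ≠ g.1 ∧ w ≠ g.2 := by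
        intro g hg
        constructor
        · intro h
          exact huIm (Finset.mem_image.mpr ⟨g, hg, h.symm⟩)
        · intro h
          exact hwun (Finset.mem_image.mpr ⟨g, hg, h.symm⟩)
      rcases Finset.mem_insert.mp he with rfl | he <;>
        rcases Finset.mem_insert.mp hf with rfl | hf
      · exact absurd rfl hef
      · exact haux f hf
      · obtain ⟨h1, h2⟩ := haux e he
        exact ⟨h1.symm, h2.symm⟩
      · exact hM2 e he f hf hef
    · apply Finset.card_insert_of_notMem
      intro h
      exact huIm (Finset.mem_image.mpr ⟨(u, w), h, rfl⟩)
  -- build a large matching by induction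
  have build : ∀ n : ℕ, ∃ M : Finset (V × V), P M ∧
      ((V₂.card : ℝ) - a ≤ M.card ∨ M.card = n) := by
    intro n
    induction n with
    | zero =>
      refine ⟨∅, ⟨?_, ?_⟩, Or.inr rfl⟩ <;> simp
    | succ n ih =>
      obtain ⟨M, hM, hc⟩ := ih
      rcases hc with hc | hc
      · exact ⟨M, hM, Or.inl hc⟩
      · by_cases h : (M.card : ℝ) < (V₂.card : ℝ) - a
        · obtain ⟨M', hM', hcard'⟩ := key M hM h
          exact ⟨M', hM', Or.inr (by omega)⟩
        · exact ⟨M, hM, Or.inl (le_of_not_gt h)⟩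
  obtain ⟨M, hM, hc⟩ := build V₂.card
  have hMbig : (V₂.card : ℝ) - a ≤ M.card := by
    rcases hc with hc | hc
    · exact hc
    · rw [hc]; linarith
  obtain ⟨hM1, hM2⟩ := hM
  -- reachability between any two vertices of V₁
  have hreach : ∀ u ∈ V₁, ∀ u' ∈ V₁, G.Reachable u u' := by
    intro u hu u' hu'
    have h1 := hd₁ u hu
    have h2 := hd₁ u' hu'
    rw [hdeg V₂ u] at h1
    rw [hdeg V₂ u'] at h2
    set Nu := V₂.filter (fun z => G.Adj u z)
    set Nu' := V₂.filter (fun z => G.Adj u' z)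
    have hinter : (Nu ∩ Nu').Nonempty := by
      rw [← Finset.card_pos]
      by_contra h
      push_neg at h
      have h0 : (Nu ∩ Nu').card = 0 := by omega
      have hcup : (Nu ∪ Nu').card ≤ V₂.card := by
        apply Finset.card_le_card
        intro x hx
        rcases Finset.mem_union.mp hx with h | h
        · exact (Finset.mem_filter.mp h).1
        · exact (Finset.mem_filter.mp h).1
      have hsum := Finset.card_union_add_card_inter Nu Nu'
      have hsum' : Nu.card + Nu'.card ≤ V₂.card := by omega
      have hsum'' : (Nu.card : ℝ) + Nu'.card ≤ V₂.card := by exact_mod_cast hsum'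
      linarith
    obtain ⟨z, hz⟩ := hinter
    have h3 : G.Adj u z := (Finset.mem_filter.mp (Finset.mem_inter.mp hz).1).2
    have h4 : G.Adj u' z := (Finset.mem_filter.mp (Finset.mem_inter.mp hz).2).2
    exact (h3.reachable).trans h4.reachable.symm
  refine ⟨M, ⟨?_, ?_, ?_⟩, by linarith⟩
  · intro e he
    exact (hM1 e he).1
  · intro e he f hf hef
    obtain ⟨h1, h2⟩ := hM2 e he f hf hef
    have he' := hM1 e he
    have hf' := hM1 f hf
    refine ⟨h1, ?_, ?_, h2⟩
    · intro h
      exact (Finset.disjoint_left.mp hdisj he'.2.1) (h ▸ hf'.2.2)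
    · intro h
      exact (Finset.disjoint_left.mp hdisj hf'.2.1) (h ▸ he'.2.2)
  · intro e he f hf
    exact hreach e.1 (hM1 e he).2.1 f.1 (hM1 f hf).2.1
end

section
/- Let α1 > 0 and let η satisfy 0 < η ≤ (α1/100)^{64}. There exists n0 = n0(α1, η) such that for every integer n > n0 the following holds: let G be a complete graph whose edges are coloured with three colours (red, blue, green), containing disjoint vertex sets X1 and Y1 with |X1|, |Y1| ≥ (1/2)⟨⟨α1 n⟩⟩ such that the red graphs G1[X1] and G1[Y1] are each 8η^{1/64}n-almost-complete. If there exist distinct vertices x1, x2 ∈ X1 and distinct vertices y1, y2 ∈ Y1 such that the edges x1y1 and x2y2 are both coloured red, then G contains a red cycle on exactly ⟨⟨α1 n⟩⟩ vertices. -/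
open SimpleGraph

section AuxHamilton


lemma exists_walk_of_chain' {V : Type*} (G : SimpleGraph V) :
    ∀ (l : List V) (a b : V), List.Chain' G.Adj (a :: l) →
      (a :: l).getLast (by simp) = b → ∃ w : G.Walk a b, w.support = a :: l := by
  intro l
  induction l with
  | nil =>
    intro a b _ hb
    simp only [List.getLast_singleton] at hb
    subst hb
    exact ⟨Walk.nil, rfl⟩
  | cons y t ih =>
    intro a b hc hb
    have hadj : G.Adj a y := (List.isChain_cons_cons.mp hc).1
    have hc' : List.Chain' G.Adj (y :: t) := (List.isChain_cons_cons.mp hc).2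
    have hb' : (y :: t).getLast (by simp) = b := by
      rw [← hb]; exact (List.getLast_cons (by simp)).symm
    obtain ⟨w, hw⟩ := ih y b hc' hb'
    exact ⟨Walk.cons hadj w, by simp [hw]⟩

lemma hamPath {V : Type*} [DecidableEq V] (G : SimpleGraph V) [DecidableRel G.Adj]
    (S : Finset V) (d : ℕ)
    (hdeg : ∀ v ∈ S, (S.filter (fun u => u ≠ v ∧ ¬ G.Adj v u)).card ≤ d)
    (hcard : 4 * d + 6 ≤ S.card) {a b : V} (ha : a ∈ S) (hb : b ∈ S) (hab : a ≠ b) :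
    ∃ w : G.Walk a b, w.IsPath ∧ w.support.toFinset = S := by
  classical
  set P : List V → Prop := fun l => l.Chain' G.Adj ∧ l.Nodup ∧ (∀ x ∈ l, x ∈ S) ∧
    l.head? = some a ∧ l.getLast? = some b with hP
  have hlen : ∀ l : List V, l.Nodup → (∀ x ∈ l, x ∈ S) → l.length ≤ S.card := by
    intro l hn hs
    rw [← List.toFinset_card_of_nodup hn]
    exact Finset.card_le_card (fun x hx => hs x (List.mem_toFinset.mp hx))
  -- greedy construction of a long path starting at a, avoiding b, ending adjacent to b
  have greedy : ∀ k : ℕ, k ≤ 2*d+2 → ∃ l : List V, l.length = k + 1 ∧ l.Chain' G.Adj ∧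
      l.Nodup ∧ (∀ x ∈ l, x ∈ S) ∧ l.head? = some a ∧ b ∉ l ∧
      ∀ x ∈ l, x = a ∨ G.Adj x b := by
    intro k
    induction k with
    | zero =>
      intro _
      refine ⟨[a], rfl, List.isChain_singleton a, List.nodup_singleton a, ?_, rfl, ?_, ?_⟩
      · simpa using ha
      · simpa using hab.symm
      · simp
    | succ k ih =>
      intro hk
      obtain ⟨l, hlen1, hchain, hnodup, hmem, hhead, hbnot, hadjb⟩ := ih (by omega)
      have hl_ne : l ≠ [] := by intro h; simp [h] at hlen1
      set e := l.getLast hl_ne with he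
      have he_mem : e ∈ l := List.getLast_mem hl_ne
      have heS : e ∈ S := hmem e he_mem
      set bad : Finset V := (S.filter (fun u => u ≠ e ∧ ¬ G.Adj e u)) ∪
        (S.filter (fun u => u ≠ b ∧ ¬ G.Adj b u)) ∪ l.toFinset ∪ {b} with hbad
      have hbadcard : bad.card ≤ d + d + (k+1) + 1 := by
        refine le_trans (Finset.card_union_le _ _) ?_
        have h1 : ((S.filter (fun u => u ≠ e ∧ ¬ G.Adj e u)) ∪
            (S.filter (fun u => u ≠ b ∧ ¬ G.Adj b u)) ∪ l.toFinset).card ≤ d + d + (k+1) := by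
          refine le_trans (Finset.card_union_le _ _) ?_
          have h2 := Finset.card_union_le (S.filter (fun u => u ≠ e ∧ ¬ G.Adj e u))
            (S.filter (fun u => u ≠ b ∧ ¬ G.Adj b u))
          have h3 : l.toFinset.card = k + 1 := by
            rw [List.toFinset_card_of_nodup hnodup, hlen1]
          have := hdeg e heS
          have := hdeg b hb
          omega
        simp only [Finset.card_singleton]
        omega
      have hlt : bad.card < S.card := by omega
      obtain ⟨u, huS, hubad⟩ : ∃ u ∈ S, u ∉ bad := by
        by_contra hcon
        push_neg at hcon
        exact absurd (Finset.card_le_card hcon) (not_le.mpr hlt)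
      have hu_nl : u ∉ l := fun h => hubad (by
        simp only [hbad, Finset.mem_union]
        exact Or.inl (Or.inr (List.mem_toFinset.mpr h)))
      have hu_ne_b : u ≠ b := fun h => hubad (by
        simp [hbad, h])
      have hu_adj_e : G.Adj e u := by
        by_contra hne
        refine hubad ?_
        simp only [hbad, Finset.mem_union, Finset.mem_filter]
        exact Or.inl (Or.inl (Or.inl ⟨huS, fun h => hu_nl (h ▸ he_mem), hne⟩))
      have hu_adj_b : G.Adj u b := by
        by_contra hne
        refine hubad ?_
        simp only [hbad, Finset.mem_union, Finset.mem_filter]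
        exact Or.inl (Or.inl (Or.inr ⟨huS, hu_ne_b, fun h => hne h.symm⟩))
      refine ⟨l ++ [u], by simp [hlen1], ?_, ?_, ?_, ?_, ?_, ?_⟩
      · rw [show List.Chain' G.Adj (l ++ [u]) = List.IsChain G.Adj (l ++ [u]) from rfl, List.isChain_append]
        refine ⟨hchain, List.isChain_singleton u, ?_⟩
        intro x hx y hy
        rw [List.getLast?_eq_getLast hl_ne] at hx
        simp only [Option.mem_def, Option.some.injEq] at hx
        simp only [List.head?_cons, Option.mem_def, Option.some.injEq] at hy
        subst hx; subst hy
        exact hu_adj_e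
      · rw [List.nodup_append]
        exact ⟨hnodup, List.nodup_singleton u, by intro a' ha' b' hb' hab'; simp at hb'; subst hb'; subst hab'; exact hu_nl ha'⟩
      · intro x hx
        rcases List.mem_append.mp hx with h | h
        · exact hmem x h
        · simp at h; subst h; exact huS
      · simp [List.head?_append, hhead]
      · intro h
        rcases List.mem_append.mp h with h | h
        · exact hbnot h
        · simp at h; exact hu_ne_b h.symm
      · intro x hx
        rcases List.mem_append.mp hx with h | h
        · exact hadjb x h
        · simp at h; subst h; exact Or.inr hu_adj_b
  -- seed path from a to b of length ≥ 2d+4 vertices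
  have seed : ∃ l : List V, P l ∧ l.length = 2*d+4 := by
    obtain ⟨l, hlen1, hchain, hnodup, hmem, hhead, hbnot, hadjb⟩ := greedy (2*d+2) le_rfl
    have hl_ne : l ≠ [] := by intro h; simp [h] at hlen1
    set e := l.getLast hl_ne with he
    have he_mem : e ∈ l := List.getLast_mem hl_ne
    have he_ne_a : e ≠ a := by
      obtain ⟨c, t, rfl⟩ := List.exists_cons_of_ne_nil hl_ne
      have hca : c = a := by simpa using hhead
      have ht_ne : t ≠ [] := by intro h; subst h; simp only [List.length_cons, List.length_nil] at hlen1; omega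
      have : e ∈ t := by
        rw [he, List.getLast_cons ht_ne]
        exact List.getLast_mem ht_ne
      intro hea
      rw [hea, ← hca] at this
      exact (List.nodup_cons.mp hnodup).1 this
    have he_adj_b : G.Adj e b := (hadjb e he_mem).resolve_left he_ne_a
    refine ⟨l ++ [b], ⟨?_, ?_, ?_, ?_, ?_⟩, by simp [hlen1]⟩
    · rw [show List.Chain' G.Adj (l ++ [b]) = List.IsChain G.Adj (l ++ [b]) from rfl, List.isChain_append]
      refine ⟨hchain, List.isChain_singleton b, ?_⟩
      intro x hx y hy
      rw [List.getLast?_eq_getLast hl_ne] at hx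
      simp only [Option.mem_def, Option.some.injEq] at hx
      simp only [List.head?_cons, Option.mem_def, Option.some.injEq] at hy
      subst hx; subst hy; exact he_adj_b
    · rw [List.nodup_append]
      exact ⟨hnodup, List.nodup_singleton b, by intro a' ha' b' hb' hab'; simp at hb'; subst hb'; subst hab'; exact hbnot ha'⟩
    · intro x hx
      rcases List.mem_append.mp hx with h | h
      · exact hmem x h
      · simp at h; subst h; exact hb
    · simp [List.head?_append, hhead]
    · simp [List.getLast?_append]
  obtain ⟨l₀, hPl₀, hl₀len⟩ := seed
  have hl₀S : l₀.length ≤ S.card := hlen l₀ hPl₀.2.1 hPl₀.2.2.1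
  set Q : ℕ → Prop := fun k => ∃ l : List V, P l ∧ l.length = k with hQ
  have hQ0 : Q (2*d+4) := ⟨l₀, hPl₀, hl₀len⟩
  have h04 : 2*d+4 ≤ S.card := hl₀len ▸ hl₀S
  set L := Nat.findGreatest Q S.card with hL
  obtain ⟨l, hPl, hlL⟩ : Q L := Nat.findGreatest_spec h04 hQ0
  have hLge : 2*d+4 ≤ L := Nat.le_findGreatest h04 hQ0
  obtain ⟨hchain, hnodup, hmem, hhead, hlast⟩ := hPl
  have hne : l ≠ [] := by
    intro h; rw [h] at hlL; simp at hlL; omega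
  have hLS : L ≤ S.card := hlL ▸ hlen l hnodup hmem
  -- maximality implies l covers S
  have hcover : l.toFinset = S := by
    by_contra hcov
    have hsub : l.toFinset ⊆ S := fun x hx => hmem x (List.mem_toFinset.mp hx)
    obtain ⟨w, hwS, hwl'⟩ := Finset.exists_of_ssubset (hsub.ssubset_of_ne hcov)
    have hwl : w ∉ l := fun h => hwl' (List.mem_toFinset.mpr h)
    -- find a good consecutive pair
    have key : ∃ i : ℕ, ∃ h : i + 1 < l.length,
        G.Adj w (l[i]'(by omega)) ∧ G.Adj w (l[i+1]'h) := by
      by_contra hno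
      push_neg at hno
      have hbadw := hdeg w hwS
      have main : ∀ j : Fin (d+1), ∃ i : ℕ, ∃ hil : i < l.length, i/2 = (j : ℕ) ∧
          l[i]'hil ∈ S.filter (fun u => u ≠ w ∧ ¬ G.Adj w u) := by
        intro j
        have hj : (j : ℕ) ≤ d := by omega
        have h2j : 2*(j : ℕ)+1 < l.length := by omega
        have hcase := hno (2*(j : ℕ)) h2j
        by_cases hA : G.Adj w (l[2*(j : ℕ)]'(by omega))
        · have hB := hcase hA
          refine ⟨2*(j : ℕ)+1, h2j, by omega, ?_⟩
          simp only [Finset.mem_filter]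
          refine ⟨hmem _ (List.getElem_mem _), ?_, ?_⟩
          · intro h; exact hwl (h ▸ List.getElem_mem _)
          · intro h; exact hB h
        · refine ⟨2*(j : ℕ), by omega, by omega, ?_⟩
          simp only [Finset.mem_filter]
          refine ⟨hmem _ (List.getElem_mem _), ?_, ?_⟩
          · intro h; exact hwl (h ▸ List.getElem_mem _)
          · intro h; exact hA h
      choose p hlt hp1 hp2 using main
      have hinj : Set.InjOn (fun j : Fin (d+1) => l[p j]'(hlt j))
          ↑(Finset.univ : Finset (Fin (d+1))) := by
        intro j₁ _ j₂ _ hEq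
        have hpp : p j₁ = p j₂ := (hnodup.getElem_inj_iff).mp hEq
        have h1 := hp1 j₁
        have h2 := hp1 j₂
        apply Fin.ext
        omega
      have hcard2 : (Finset.univ : Finset (Fin (d+1))).card ≤
          (S.filter (fun u => u ≠ w ∧ ¬ G.Adj w u)).card :=
        Finset.card_le_card_of_injOn _ (fun j _ => hp2 j) hinj
      simp only [Finset.card_univ, Fintype.card_fin] at hcard2
      omega
    obtain ⟨i, hi, hwx, hwy⟩ := key
    set x := l[i]'(by omega) with hx
    set y := l[i+1]'hi with hy
    set A := l.take i with hA
    set B := l.drop (i+2) with hB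
    have hsplit : l = A ++ x :: y :: B := by
      conv_lhs => rw [← List.take_append_drop i l]
      rw [List.drop_eq_getElem_cons (l := l) (by omega : i < l.length)]
      rw [List.drop_eq_getElem_cons (l := l) (by omega : i + 1 < l.length)]
    set l' := A ++ x :: w :: y :: B with hl'
    have hperm : l'.Perm (w :: l) := by
      conv_rhs => rw [hsplit]
      exact (List.Perm.append_left A (List.Perm.swap x w (y :: B)).symm).trans
        List.perm_middle
    have hnodup' : l'.Nodup := hperm.nodup_iff.mpr (List.nodup_cons.mpr ⟨hwl, hnodup⟩)
    have hchain' : l'.Chain' G.Adj := by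
      rw [hsplit, show List.Chain' G.Adj (A ++ x :: y :: B) = List.IsChain G.Adj (A ++ x :: y :: B) from rfl, List.isChain_append] at hchain
      obtain ⟨hcA, hcxy, hcross⟩ := hchain
      rw [List.isChain_cons_cons] at hcxy
      rw [hl', show List.Chain' G.Adj (A ++ x :: w :: y :: B) = List.IsChain G.Adj (A ++ x :: w :: y :: B) from rfl, List.isChain_append]
      refine ⟨hcA, ?_, ?_⟩
      · rw [List.isChain_cons_cons]
        refine ⟨hwx.symm, ?_⟩
        rw [List.isChain_cons_cons]
        exact ⟨hwy, hcxy.2⟩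
      · intro p' hp' q hq
        simp only [List.head?_cons, Option.mem_def, Option.some.injEq] at hq
        subst hq
        exact hcross p' hp' x (by simp)
    have hmem' : ∀ z ∈ l', z ∈ S := by
      intro z hz
      rcases List.mem_cons.mp (hperm.mem_iff.mp hz) with h | h
      · subst h; exact hwS
      · exact hmem z h
    have hhead' : l'.head? = some a := by
      rw [hl', List.head?_append]
      rw [hsplit, List.head?_append] at hhead
      simpa using hhead
    have hlast' : l'.getLast? = some b := by
      rw [hl', List.getLast?_append, List.getLast?_cons_cons]
      rw [hsplit, List.getLast?_append, List.getLast?_cons_cons] at hlast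
      exact hlast
    have hlen' : l'.length = L + 1 := by
      have : l.length = A.length + (x :: y :: B).length := by rw [hsplit]; simp
      have h2 : l'.length = A.length + (x :: w :: y :: B).length := by rw [hl']; simp
      simp only [List.length_cons] at this h2
      omega
    have hQL1 : Q (L + 1) := ⟨l', ⟨hchain', hnodup', hmem', hhead', hlast'⟩, hlen'⟩
    have hle : L + 1 ≤ S.card := hlen' ▸ hlen l' hnodup' hmem'
    have := Nat.le_findGreatest hle hQL1
    omega
  -- convert to a walk
  obtain ⟨c, t, rfl⟩ := List.exists_cons_of_ne_nil hne
  have hca : a = c := by symm; simpa using hhead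
  subst hca
  have hgb : (a :: t).getLast (by simp) = b := by
    rw [List.getLast?_eq_getLast (by simp : a :: t ≠ [])] at hlast
    simpa using hlast
  obtain ⟨wk, hwk⟩ := exists_walk_of_chain' G t a b hchain hgb
  refine ⟨wk, ?_, ?_⟩
  · rw [Walk.isPath_def, hwk]; exact hnodup
  · rw [hwk]; exact hcover

lemma degIn_eq {V : Type*} [DecidableEq V] (G : SimpleGraph V) [DecidableRel G.Adj]
    (S : Finset V) (v : V) : degIn G S v = (S.filter (fun u => G.Adj v u)).card := by
  unfold degIn
  rw [← Set.ncard_coe_finset]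
  congr 1
  ext u
  simp [Finset.mem_filter]

lemma nonnbr_bound {V : Type*} [DecidableEq V] (G : SimpleGraph V) [DecidableRel G.Adj]
    (S : Finset V) (v : V) (hv : v ∈ S) (D : ℝ)
    (h : ((S.card : ℝ) - 1) - D ≤ (degIn G S v : ℝ)) :
    ((S.filter (fun u => u ≠ v ∧ ¬ G.Adj v u)).card : ℝ) ≤ D := by
  set A := S.filter (fun u => G.Adj v u) with hA
  set B := S.filter (fun u => u ≠ v ∧ ¬ G.Adj v u) with hB
  have hpart : S = insert v (A ∪ B) := by
    ext u
    simp only [Finset.mem_insert, Finset.mem_union, hA, hB, Finset.mem_filter]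
    constructor
    · intro hu
      by_cases h1 : u = v
      · exact Or.inl h1
      · by_cases h2 : G.Adj v u
        · exact Or.inr (Or.inl ⟨hu, h2⟩)
        · exact Or.inr (Or.inr ⟨hu, h1, h2⟩)
    · rintro (rfl | ⟨hu, _⟩ | ⟨hu, _⟩) <;> first | exact hv | exact hu
  have hvAB : v ∉ A ∪ B := by
    simp only [Finset.mem_union, hA, hB, Finset.mem_filter]
    rintro (⟨_, hadj⟩ | ⟨_, hne, _⟩)
    · exact G.loopless.irrefl v hadj
    · exact hne rfl
  have hAB : Disjoint A B := by
    rw [Finset.disjoint_left]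
    intro u hu1 hu2
    rw [hA, Finset.mem_filter] at hu1
    rw [hB, Finset.mem_filter] at hu2
    exact hu2.2.2 hu1.2
  have hcard : S.card = 1 + A.card + B.card := by
    rw [hpart, Finset.card_insert_of_notMem hvAB, Finset.card_union_of_disjoint hAB]
    omega
  rw [degIn_eq] at h
  have : (S.card : ℝ) = 1 + A.card + B.card := by exact_mod_cast hcard
  rw [← hA] at h
  linarith


end AuxHamilton

/-- Two vertex-disjoint red edges between two large red-almost-complete sets yield a red cycle
on exactly `⟪α₁ n⟫` vertices. -/
theorem red_cycle_from_two_edges (α₁ η : ℝ) (hα₁ : 0 < α₁) (hη0 : 0 < η)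
    (hη : η ≤ (α₁ / 100) ^ (64 : ℕ)) :
    ∃ n₀ : ℕ, ∀ n : ℕ, n₀ < n →
      ∀ (V : Type) [Fintype V], ∀ (χ : Sym2 V → Fin 3) (X₁ Y₁ : Finset V),
        Disjoint X₁ Y₁ →
        (evenFloor (α₁ * n) : ℝ) / 2 ≤ (X₁.card : ℝ) →
        (evenFloor (α₁ * n) : ℝ) / 2 ≤ (Y₁.card : ℝ) →
        (∀ v ∈ X₁, ((X₁.card : ℝ) - 1) - 8 * η ^ ((1 : ℝ) / 64) * n ≤
          (degIn (colourGraph χ 0) X₁ v : ℝ)) →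
        (∀ v ∈ Y₁, ((Y₁.card : ℝ) - 1) - 8 * η ^ ((1 : ℝ) / 64) * n ≤
          (degIn (colourGraph χ 0) Y₁ v : ℝ)) →
        ∀ x₁ x₂ y₁ y₂ : V, x₁ ∈ X₁ → x₂ ∈ X₁ → x₁ ≠ x₂ → y₁ ∈ Y₁ → y₂ ∈ Y₁ → y₁ ≠ y₂ →
          χ s(x₁, y₁) = 0 → χ s(x₂, y₂) = 0 →
          HasCycleLen (colourGraph χ 0) (evenFloor (α₁ * n)).toNat := by
  
  classical
  refine ⟨⌈(1000 : ℝ)/α₁⌉₊ + 1000, ?_⟩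
  intro n hn V _ χ X₁ Y₁ hdisj hX hY hdegX hdegY x₁ x₂ y₁ y₂ hx₁ hx₂ hx12 hy₁ hy₂ hy12 hc1 hc2
  have hα1000 : (1000 : ℝ) ≤ α₁ * n := by
    have h1 : ((⌈(1000 : ℝ)/α₁⌉₊ : ℝ)) ≤ (n : ℝ) := by
      have h2 : ⌈(1000 : ℝ)/α₁⌉₊ ≤ n := by omega
      exact_mod_cast h2
    have h3 : (1000 : ℝ)/α₁ ≤ (n : ℝ) := le_trans (Nat.le_ceil _) h1
    have h4 := mul_le_mul_of_nonneg_left h3 hα₁.le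
    rw [mul_div_cancel₀ _ (ne_of_gt hα₁)] at h4
    linarith
  set t : ℤ := ⌊α₁ * n / 2⌋ with ht
  have ht1 : α₁ * n / 2 - 1 < (t : ℝ) := Int.sub_one_lt_floor _
  have ht2 : (t : ℝ) ≤ α₁ * n / 2 := Int.floor_le _
  have htpos : 0 < t := by
    have : (0 : ℝ) < (t : ℝ) := by linarith
    exact_mod_cast this
  set tN : ℕ := t.toNat with htN
  have htNc : (tN : ℝ) = (t : ℝ) := by
    rw [htN]; exact_mod_cast Int.toNat_of_nonneg htpos.le
  have hm : (evenFloor (α₁ * n)).toNat = 2 * tN := by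
    have h1 : evenFloor (α₁ * n) = 2 * t := rfl
    omega
  set D : ℝ := 8 * η ^ ((1 : ℝ)/64) * n with hD
  have hrpow_nn : (0 : ℝ) ≤ η ^ ((1 : ℝ)/64) := Real.rpow_nonneg hη0.le _
  have hDnn : 0 ≤ D := by
    rw [hD]
    have : (0 : ℝ) ≤ (n : ℝ) := Nat.cast_nonneg n
    positivity
  set dN : ℕ := ⌊D⌋₊ with hdN
  have hdD : (dN : ℝ) ≤ D := Nat.floor_le hDnn
  have hηb : η ^ ((1 : ℝ)/64) ≤ α₁/100 := by
    have h0 : (0 : ℝ) ≤ α₁/100 := by positivity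
    have h1 := Real.rpow_le_rpow hη0.le hη (by norm_num : (0 : ℝ) ≤ 1/64)
    have h2 : ((α₁/100) ^ (64 : ℕ)) ^ ((1 : ℝ)/64) = α₁/100 := by
      rw [← Real.rpow_natCast (α₁/100) 64, ← Real.rpow_mul h0]
      norm_num
    linarith [h1, h2.le, h2.ge]
  have hDb : D ≤ 8 * (α₁/100) * n := by
    rw [hD]
    have hn0 : (0 : ℝ) ≤ (n : ℝ) := Nat.cast_nonneg n
    nlinarith
  have hsize : 4 * dN + 6 ≤ tN := by
    have h1 : (4 * dN + 6 : ℝ) ≤ (tN : ℝ) := by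
      rw [htNc]
      nlinarith [hdD, hDb, ht1, hα1000]
    exact_mod_cast h1
  have hXc : tN ≤ X₁.card := by
    have h0 : ((evenFloor (α₁ * n) : ℤ) : ℝ)/2 = (t : ℝ) := by
      show ((2 * t : ℤ) : ℝ)/2 = (t : ℝ)
      push_cast; ring
    have h1 : (tN : ℝ) ≤ (X₁.card : ℝ) := by rw [htNc, ← h0]; exact hX
    exact_mod_cast h1
  have hYc : tN ≤ Y₁.card := by
    have h0 : ((evenFloor (α₁ * n) : ℤ) : ℝ)/2 = (t : ℝ) := by
      show ((2 * t : ℤ) : ℝ)/2 = (t : ℝ)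
      push_cast; ring
    have h1 : (tN : ℝ) ≤ (Y₁.card : ℝ) := by rw [htNc, ← h0]; exact hY
    exact_mod_cast h1
  -- choose the sets X' and Y'
  have hx12sub : ({x₁, x₂} : Finset V) ⊆ X₁ := by
    intro z hz
    rcases Finset.mem_insert.mp hz with rfl | hz
    · exact hx₁
    · rw [Finset.mem_singleton] at hz; subst hz; exact hx₂
  have hy12sub : ({y₂, y₁} : Finset V) ⊆ Y₁ := by
    intro z hz
    rcases Finset.mem_insert.mp hz with rfl | hz
    · exact hy₂
    · rw [Finset.mem_singleton] at hz; subst hz; exact hy₁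
  have hx12card : ({x₁, x₂} : Finset V).card ≤ tN := by
    have := Finset.card_insert_le x₁ ({x₂} : Finset V)
    simp only [Finset.card_singleton] at this
    omega
  have hy12card : ({y₂, y₁} : Finset V).card ≤ tN := by
    have := Finset.card_insert_le y₂ ({y₁} : Finset V)
    simp only [Finset.card_singleton] at this
    omega
  obtain ⟨X', hX'1, hX'2, hX'card⟩ := Finset.exists_subsuperset_card_eq hx12sub hx12card hXc
  obtain ⟨Y', hY'1, hY'2, hY'card⟩ := Finset.exists_subsuperset_card_eq hy12sub hy12card hYc
  have hx₁' : x₁ ∈ X' := hX'1 (by simp)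
  have hx₂' : x₂ ∈ X' := hX'1 (by simp)
  have hy₁' : y₁ ∈ Y' := hY'1 (by simp)
  have hy₂' : y₂ ∈ Y' := hY'1 (by simp)
  -- degree conditions on X', Y'
  set G : SimpleGraph V := colourGraph χ 0 with hG
  have hdegX' : ∀ v ∈ X', (X'.filter (fun u => u ≠ v ∧ ¬ G.Adj v u)).card ≤ dN := by
    intro v hv
    have hv1 : v ∈ X₁ := hX'2 hv
    have h1 : ((X₁.filter (fun u => u ≠ v ∧ ¬ G.Adj v u)).card : ℝ) ≤ D :=
      nonnbr_bound G X₁ v hv1 D (by rw [hD]; exact hdegX v hv1)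
    have h2 : (X'.filter (fun u => u ≠ v ∧ ¬ G.Adj v u)).card ≤
        (X₁.filter (fun u => u ≠ v ∧ ¬ G.Adj v u)).card :=
      Finset.card_le_card (Finset.filter_subset_filter _ hX'2)
    have h3 : ((X'.filter (fun u => u ≠ v ∧ ¬ G.Adj v u)).card : ℝ) ≤ D := by
      refine le_trans ?_ h1; exact_mod_cast h2
    exact Nat.le_floor h3
  have hdegY' : ∀ v ∈ Y', (Y'.filter (fun u => u ≠ v ∧ ¬ G.Adj v u)).card ≤ dN := by
    intro v hv
    have hv1 : v ∈ Y₁ := hY'2 hv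
    have h1 : ((Y₁.filter (fun u => u ≠ v ∧ ¬ G.Adj v u)).card : ℝ) ≤ D :=
      nonnbr_bound G Y₁ v hv1 D (by rw [hD]; exact hdegY v hv1)
    have h2 : (Y'.filter (fun u => u ≠ v ∧ ¬ G.Adj v u)).card ≤
        (Y₁.filter (fun u => u ≠ v ∧ ¬ G.Adj v u)).card :=
      Finset.card_le_card (Finset.filter_subset_filter _ hY'2)
    have h3 : ((Y'.filter (fun u => u ≠ v ∧ ¬ G.Adj v u)).card : ℝ) ≤ D := by
      refine le_trans ?_ h1; exact_mod_cast h2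
    exact Nat.le_floor h3
  -- Hamilton paths
  obtain ⟨pX, hpXpath, hpXsupp⟩ := hamPath G X' dN hdegX' (by omega) hx₁' hx₂' hx12
  obtain ⟨pY, hpYpath, hpYsupp⟩ := hamPath G Y' dN hdegY' (by omega) hy₂' hy₁' (Ne.symm hy12)
  -- connecting edges
  have hx₂y₂ne : x₂ ≠ y₂ := by
    intro h
    exact (Finset.disjoint_left.mp hdisj hx₂) (h ▸ hy₂)
  have hy₁x₁ne : y₁ ≠ x₁ := by
    intro h
    exact (Finset.disjoint_left.mp hdisj hx₁) (h ▸ hy₁)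
  have hxy2 : G.Adj x₂ y₂ := by rw [hG]; exact ⟨hx₂y₂ne, hc2⟩
  have hyx1 : G.Adj y₁ x₁ := by rw [hG]; exact ⟨hy₁x₁ne, by rw [Sym2.eq_swap]; exact hc1⟩
  -- build the path
  set p : G.Walk x₁ y₁ := pX.append (Walk.cons hxy2 pY) with hp
  have hpsupp : p.support = pX.support ++ pY.support := by
    rw [hp, Walk.support_append, Walk.support_cons]
    rfl
  have hXmem : ∀ z ∈ pX.support, z ∈ X₁ := by
    intro z hz
    exact hX'2 (hpXsupp ▸ List.mem_toFinset.mpr hz)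
  have hYmem : ∀ z ∈ pY.support, z ∈ Y₁ := by
    intro z hz
    exact hY'2 (hpYsupp ▸ List.mem_toFinset.mpr hz)
  have hpath : p.IsPath := by
    rw [Walk.isPath_def, hpsupp]
    refine List.Nodup.append ((Walk.isPath_def _).mp hpXpath)
      ((Walk.isPath_def _).mp hpYpath) ?_
    intro z hz1 hz2
    exact (Finset.disjoint_left.mp hdisj (hXmem z hz1)) (hYmem z hz2)
  have hedge : s(y₁, x₁) ∉ p.edges := by
    intro hmem
    rw [hp, Walk.edges_append, Walk.edges_cons] at hmem
    rcases List.mem_append.mp hmem with h | h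
    · have : y₁ ∈ pX.support := Walk.fst_mem_support_of_mem_edges pX h
      exact (Finset.disjoint_left.mp hdisj (hXmem y₁ this)) hy₁
    · rcases List.mem_cons.mp h with h | h
      · rw [Sym2.eq_iff] at h
        rcases h with ⟨h1, _⟩ | ⟨h1, _⟩
        · exact (Finset.disjoint_left.mp hdisj hx₂) (h1 ▸ hy₁)
        · exact hy12 h1
      · have : x₁ ∈ pY.support := Walk.snd_mem_support_of_mem_edges pY h
        exact (Finset.disjoint_left.mp hdisj hx₁) (hYmem x₁ this)
  refine ⟨y₁, Walk.cons hyx1 p, (Walk.cons_isCycle_iff p hyx1).mpr ⟨hpath, hedge⟩, ?_⟩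
  have hlenX : pX.support.length = tN := by
    rw [← hX'card, ← hpXsupp, List.toFinset_card_of_nodup ((Walk.isPath_def _).mp hpXpath)]
  have hlenY : pY.support.length = tN := by
    rw [← hY'card, ← hpYsupp, List.toFinset_card_of_nodup ((Walk.isPath_def _).mp hpYpath)]
  have hplen : p.support.length = p.length + 1 := Walk.length_support p
  have hplen2 : p.support.length = 2 * tN := by
    rw [hpsupp, List.length_append, hlenX, hlenY]; omega
  rw [Walk.length_cons, hm]
  omega
end
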